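/- arXiv:1505.01464 — 7 statements merged into one kernel-verified Lean document; each statement's English description precedes it below -/
import Mathlib

section
/- Let n be an odd integer with n ≥ 5, T = {an + b(3n−2) + c(3n−1) : a,b,c ∈ ℕ}, F(T) = n(3n−7)/2 + 2, and S = T ∪ {F(T)}. Then for every integer i with 1 ≤ i ≤ (n−1)/2, the set M_i of elements of Ap(S, F(T)) having exactly i factorizations has cardinality 6n − 12i − 1. -/
/-- The numerical semigroup `T = ⟨n, 3n-2, 3n-1⟩` as a subset of `ℕ`. -/
def Tset (n : ℕ) : Set ℕ :=
  {s | ∃ a b c : ℕ, s = a * n + b * (3 * n - 2) + c * (3 * n - 1)}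

/-- The Frobenius number of `T`, `F(T) = n(3n-7)/2 + 2` (exact division since `n` is odd). -/
def FT (n : ℕ) : ℕ := n * (3 * n - 7) / 2 + 2

/-- The numerical semigroup `S = T ∪ {F(T)} = ⟨n, 3n-2, 3n-1, F(T)⟩`. -/
def Sset (n : ℕ) : Set ℕ := Tset n ∪ {FT n}

/-- The Apéry set `Ap(S, F(T)) = {s ∈ S | s - F(T) ∉ S}`. -/
def Ap (n : ℕ) : Set ℕ := {s ∈ Sset n | ¬ ∃ t ∈ Sset n, t + FT n = s}

/-- `phi n (x,y,z) = xn + y(3n-2) + z(3n-1)`. -/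
def phi (n : ℕ) (p : ℕ × ℕ × ℕ) : ℕ :=
  p.1 * n + p.2.1 * (3 * n - 2) + p.2.2 * (3 * n - 1)

/-- The set of factorizations of `s` with respect to `(n, 3n-2, 3n-1)`. -/
def Zfac (n s : ℕ) : Set (ℕ × ℕ × ℕ) := {p | phi n p = s}

/-- `p` is the normal form of `s`: a factorization with `z < 2`, `y < (n+1)/2`,
`x < (3n-1)/2`. -/
def IsNF (n s : ℕ) (p : ℕ × ℕ × ℕ) : Prop :=
  p ∈ Zfac n s ∧ p.2.2 < 2 ∧ p.2.1 < (n + 1) / 2 ∧ p.1 < (3 * n - 1) / 2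

/-- `M_i`: elements of the Apéry set having exactly `i` factorizations. -/
def Mset (n i : ℕ) : Set ℕ := {s ∈ Ap n | (Zfac n s).ncard = i}

/-- `nf(M_i)`: normal forms of elements of `M_i`. -/
def nfM (n i : ℕ) : Set (ℕ × ℕ × ℕ) := {p | ∃ s ∈ Mset n i, IsNF n s p}

/-- An L-shape associated with `Ap(S, F(T))`: (C1) `phi` is a bijection from `L` onto the
Apéry set; (C2) `L` is downward closed for the componentwise order. -/
def IsLShape (n : ℕ) (L : Set (ℕ × ℕ × ℕ)) : Prop :=
  Set.BijOn (phi n) L (Ap n) ∧ ∀ u ∈ L, ∀ v : ℕ × ℕ × ℕ, v ≤ u → v ∈ L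

/-- The L-shape `F = F₁ ∪ F₂ ∪ F₃ ∪ F₄` (in `F₃`, `y ≤ (n-7)/2` is stated over the
integers as `2y + 7 ≤ n`, so that `F₃ = ∅` when `n = 5`). -/
def Fset (n : ℕ) : Set (ℕ × ℕ × ℕ) :=
  {p | p.2.2 = 0 ∧ p.1 ≤ (3 * n - 3) / 2 ∧ p.2.1 ≤ (n - 3) / 2} ∪
  {p | p.2.2 = 0 ∧ p.1 ≤ 1 ∧ p.2.1 = (n - 1) / 2} ∪
  {p | p.2.2 = 1 ∧ p.1 ≤ (3 * n - 3) / 2 ∧ 2 * p.2.1 + 7 ≤ n} ∪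
  {p | p.2.2 = 1 ∧ p.1 ≤ (3 * n - 5) / 2 ∧ p.2.1 = (n - 5) / 2}

namespace Aux

def rr (p : ℕ × ℕ × ℕ) : ℕ := 2 * p.2.1 + p.2.2
def sg (p : ℕ × ℕ × ℕ) : ℕ := p.1 + 3 * p.2.1 + 3 * p.2.2

lemma phi_expand (m : ℕ) (p : ℕ × ℕ × ℕ) :
    phi (2*m+1) p = p.1 * (2*m+1) + p.2.1 * (6*m+1) + p.2.2 * (6*m+2) := by
  have h1 : 3*(2*m+1) - 2 = 6*m+1 := by omega
  have h2 : 3*(2*m+1) - 1 = 6*m+2 := by omega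
  simp [phi, h1, h2]

lemma phi_rr (m : ℕ) (p : ℕ × ℕ × ℕ) :
    phi (2*m+1) p + rr p = (2*m+1) * sg p := by
  rw [phi_expand]; unfold rr sg; ring

lemma nf_unique (m : ℕ) (p q : ℕ × ℕ × ℕ)
    (hp : rr p ≤ 2*m) (hq : rr q ≤ 2*m) (hpz : p.2.2 ≤ 1) (hqz : q.2.2 ≤ 1)
    (h : phi (2*m+1) p = phi (2*m+1) q) : p = q := by
  have e1 := phi_rr m p
  have e2 := phi_rr m q
  have hσ : sg p = sg q := by
    rcases Nat.lt_trichotomy (sg p) (sg q) with h' | h' | h'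
    · have key : (2*m+1) * sg p + (2*m+1) ≤ (2*m+1) * sg q := by
        have := Nat.mul_le_mul_left (2*m+1) h'
        calc (2*m+1) * sg p + (2*m+1) = (2*m+1) * (sg p + 1) := by ring
          _ ≤ (2*m+1) * sg q := Nat.mul_le_mul_left _ h'
      linarith
    · exact h'
    · have key : (2*m+1) * sg q + (2*m+1) ≤ (2*m+1) * sg p := by
        calc (2*m+1) * sg q + (2*m+1) = (2*m+1) * (sg q + 1) := by ring
          _ ≤ (2*m+1) * sg p := Nat.mul_le_mul_left _ h'
      linarith
  rw [hσ] at e1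
  have hr : rr p = rr q := by omega
  obtain ⟨x, y, z⟩ := p
  obtain ⟨a, b, c⟩ := q
  simp only [rr] at hr hpz hqz ⊢
  have hyz : y = b ∧ z = c := ⟨by omega, by omega⟩
  obtain ⟨rfl, rfl⟩ := hyz
  have hx : x = a := by
    rw [phi_expand, phi_expand] at h
    simp only at h
    have : x * (2*m+1) = a * (2*m+1) := by
      have h1 : x * (2*m+1) + (y * (6*m+1) + z * (6*m+2)) = a * (2*m+1) + (y * (6*m+1) + z * (6*m+2)) := by linarith
      omega
    exact Nat.eq_of_mul_eq_mul_right (by omega) this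
  simp [hx]

end Aux
namespace Aux

lemma fac_classify (m x y z a b c : ℕ) (hm : 2 ≤ m) (hz : z ≤ 1) (hr : 2*y+z ≤ 2*m)
    (hx : x ≤ 3*m) (h : phi (2*m+1) (a,b,c) = phi (2*m+1) (x,y,z)) :
    (∃ t, 3*t ≤ x ∧ t ≤ y ∧ a = x - 3*t ∧ b = y - t ∧ c = z + 2*t) ∨
    (z = 1 ∧ 3*m-1 ≤ x ∧ a = x - (3*m-1) ∧ b = y + (m+1) ∧ c = 0) := by
  have e1 := phi_rr m (a,b,c)
  have e2 := phi_rr m (x,y,z)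
  simp only [rr, sg] at e1 e2
  -- sg comparison
  have hσle : x + 3*y + 3*z ≤ a + 3*b + 3*c := by
    by_contra h'
    push_neg at h'
    have key : (2*m+1) * (a+3*b+3*c) + (2*m+1) ≤ (2*m+1) * (x+3*y+3*z) := by
      calc (2*m+1) * (a+3*b+3*c) + (2*m+1) = (2*m+1) * ((a+3*b+3*c) + 1) := by ring
        _ ≤ (2*m+1) * (x+3*y+3*z) := Nat.mul_le_mul_left _ h'
    linarith
  obtain ⟨k, hk⟩ := Nat.exists_eq_add_of_le hσle
  have hmul : (2*m+1) * (x+3*y+3*z + k) = (2*m+1)*(x+3*y+3*z) + (2*m+1)*k :=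
    Nat.mul_add _ _ _
  have hrq : 2*b + c = 2*y + z + (2*m+1)*k := by
    rw [hk, hmul] at e1
    linarith
  have hk1 : k ≤ 1 := by
    by_contra hk2
    push_neg at hk2
    have h1 : (2*m+1)*2 ≤ (2*m+1)*k := Nat.mul_le_mul_left _ (by omega)
    have h2 : 5*k ≤ (2*m+1)*k := Nat.mul_le_mul_right _ (by omega)
    -- 2*(a+3b+3c) = 2a + 3(2b+c) + 3c ≥ 3(2b+c)
    have h3 : 3*(2*b+c) ≤ 2*(a+3*b+3*c) := by omega
    -- 2*(a+3b+3c) = 2*(x+3y+3z) + 2k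
    have h4 : a+3*b+3*c = x+3*y+3*z + k := hk
    linarith
  interval_cases k
  · left
    refine ⟨y - b, by omega, by omega, by omega, by omega, by omega⟩
  · right
    have hz1 : z = 1 := by omega
    refine ⟨hz1, by omega, by omega, by omega, by omega⟩

end Aux
namespace Aux

lemma phi_step1 (m u v z t : ℕ) :
    phi (2*m+1) (u + 3*t, v + t, z) = phi (2*m+1) (u, v, z + 2*t) := by
  rw [phi_expand, phi_expand]; simp only; ring

lemma phi_step2 (m u y : ℕ) (hm : 2 ≤ m) :
    phi (2*m+1) (u + (3*m-1), y, 1) = phi (2*m+1) (u, y + (m+1), 0) := by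
  obtain ⟨w, rfl⟩ : ∃ w, m = w + 2 := ⟨m - 2, by omega⟩
  have h : 3*(w+2) - 1 = 3*w + 5 := by omega
  rw [h, phi_expand, phi_expand]; simp only; ring

def cnt (m : ℕ) (p : ℕ × ℕ × ℕ) : ℕ :=
  min (p.1/3) p.2.1 + 1 + (if p.2.2 = 1 ∧ 3*m-1 ≤ p.1 then 1 else 0)

lemma zfac_eq (m x y z : ℕ) (hm : 2 ≤ m) (hz : z ≤ 1) (hr : 2*y+z ≤ 2*m) (hx : x ≤ 3*m) :
    Zfac (2*m+1) (phi (2*m+1) (x,y,z)) =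
      (fun t => (x - 3*t, y - t, z + 2*t)) '' Set.Iic (min (x/3) y) ∪
      (if z = 1 ∧ 3*m-1 ≤ x then {(x - (3*m-1), y + (m+1), 0)} else ∅) := by
  ext ⟨a, b, c⟩
  simp only [Zfac, Set.mem_setOf_eq, Set.mem_union, Set.mem_image, Set.mem_Iic]
  constructor
  · intro h
    rcases fac_classify m x y z a b c hm hz hr hx h with ⟨t, h1, h2, h3, h4, h5⟩ | ⟨h1, h2, h3, h4, h5⟩
    · left; exact ⟨t, by omega, by simp [h3, h4, h5]⟩
    · right; rw [if_pos ⟨h1, h2⟩]; simp [h3, h4, h5]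
  · rintro (⟨t, ht, heq⟩ | hmem)
    · have h3t : 3*t ≤ x := by
        have := Nat.div_mul_le_self x 3
        have : t ≤ x / 3 := le_trans ht (min_le_left _ _)
        omega
      have hty : t ≤ y := le_trans ht (min_le_right _ _)
      obtain ⟨u, rfl⟩ : ∃ u, x = u + 3*t := ⟨x - 3*t, by omega⟩
      obtain ⟨v, rfl⟩ : ∃ v, y = v + t := ⟨y - t, by omega⟩
      rw [← heq]
      have e : (u + 3*t - 3*t, v + t - t, z + 2*t) = (u, v, z+2*t) := by
        simp
      rw [e, phi_step1]
    · by_cases hc : z = 1 ∧ 3*m-1 ≤ x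
      · rw [if_pos hc] at hmem
        simp only [Set.mem_singleton_iff] at hmem
        obtain ⟨u, rfl⟩ : ∃ u, x = u + (3*m-1) := ⟨x - (3*m-1), by omega⟩
        rw [hmem]
        have e : (u + (3*m-1) - (3*m-1), y + (m+1), (0:ℕ)) = (u, y + (m+1), 0) := by simp
        rw [e, hc.1, ← phi_step2 m u y hm]
      · rw [if_neg hc] at hmem; exact absurd hmem (Set.notMem_empty _)

lemma zfac_ncard (m x y z : ℕ) (hm : 2 ≤ m) (hz : z ≤ 1) (hr : 2*y+z ≤ 2*m) (hx : x ≤ 3*m) :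
    (Zfac (2*m+1) (phi (2*m+1) (x,y,z))).ncard = cnt m (x,y,z) := by
  rw [zfac_eq m x y z hm hz hr hx]
  have hinj : Set.InjOn (fun t => (x - 3*t, y - t, z + 2*t)) (Set.Iic (min (x/3) y)) := by
    intro t1 h1 t2 h2 he
    simp only [Prod.mk.injEq] at he
    omega
  have himg : ((fun t => (x - 3*t, y - t, z + 2*t)) '' Set.Iic (min (x/3) y)).ncard
      = min (x/3) y + 1 := by
    rw [Set.ncard_image_of_injOn hinj]
    rw [← Finset.coe_Iic, Set.ncard_coe_finset, Nat.card_Iic]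
  have hfin : ((fun t => (x - 3*t, y - t, z + 2*t)) '' Set.Iic (min (x/3) y)).Finite := by
    apply Set.Finite.image
    rw [← Finset.coe_Iic]; exact (Finset.Iic _).finite_toSet
  by_cases hc : z = 1 ∧ 3*m-1 ≤ x
  · rw [if_pos hc]
    rw [Set.union_singleton, Set.ncard_insert_of_notMem ?_ hfin, himg]
    · simp only [cnt, if_pos (show (x,y,z).2.2 = 1 ∧ 3*m-1 ≤ (x,y,z).1 from hc)]
    · rintro ⟨t, ht, he⟩
      simp only [Prod.mk.injEq] at he
      omega
  · rw [if_neg hc, Set.union_empty, himg]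
    simp only [cnt, if_neg (show ¬((x,y,z).2.2 = 1 ∧ 3*m-1 ≤ (x,y,z).1) from hc)]

end Aux
namespace Aux

lemma fset_iff (m : ℕ) (hm : 2 ≤ m) (p : ℕ × ℕ × ℕ) :
    p ∈ Fset (2*m+1) ↔
      (p.2.2 = 0 ∧ p.1 ≤ 3*m ∧ p.2.1 + 1 ≤ m) ∨
      (p.2.2 = 0 ∧ p.1 ≤ 1 ∧ p.2.1 = m) ∨
      (p.2.2 = 1 ∧ p.1 ≤ 3*m ∧ p.2.1 + 3 ≤ m) ∨
      (p.2.2 = 1 ∧ p.1 + 1 ≤ 3*m ∧ p.2.1 + 2 = m) := by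
  simp only [Fset, Set.mem_union, Set.mem_setOf_eq]
  omega

lemma phi_mem_T (m : ℕ) (p : ℕ × ℕ × ℕ) : phi (2*m+1) p ∈ Tset (2*m+1) :=
  ⟨p.1, p.2.1, p.2.2, rfl⟩

lemma reduce_c (m : ℕ) : ∀ c a b : ℕ, ∃ a' b' c' : ℕ, c' ≤ 1 ∧ 2*b' + c' = 2*b + c ∧
    phi (2*m+1) (a',b',c') = phi (2*m+1) (a,b,c) := by
  intro c
  induction c using Nat.strong_induction_on with
  | _ c ih =>
    intro a b
    by_cases hc : c ≤ 1
    · exact ⟨a, b, c, hc, rfl, rfl⟩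
    · obtain ⟨c', rfl⟩ : ∃ c', c = c' + 2 := ⟨c - 2, by omega⟩
      obtain ⟨a', b', c'', h1, h2, h3⟩ := ih c' (by omega) (a+3) (b+1)
      refine ⟨a', b', c'', h1, by omega, h3.trans ?_⟩
      rw [phi_expand, phi_expand]; simp only; ring

lemma to_nf (m : ℕ) (hm : 2 ≤ m) : ∀ K a b c : ℕ, 2*b + c ≤ K → c ≤ 1 →
    ∃ x y z : ℕ, z ≤ 1 ∧ 2*y + z ≤ 2*m ∧ phi (2*m+1) (x,y,z) = phi (2*m+1) (a,b,c) := by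
  intro K
  induction K using Nat.strong_induction_on with
  | _ K ih =>
    intro a b c hK hc
    by_cases h1 : 2*b + c ≤ 2*m
    · exact ⟨a, b, c, hc, h1, rfl⟩
    · by_cases h2 : b = m ∧ c = 1
      · refine ⟨a + (3*m+2), 0, 0, by omega, by omega, ?_⟩
        rw [h2.1, h2.2, phi_expand, phi_expand]; simp only; ring
      · have hb : m + 1 ≤ b := by omega
        obtain ⟨b', rfl⟩ : ∃ b', b = b' + (m+1) := ⟨b - (m+1), by omega⟩
        have hstep : phi (2*m+1) (a + (3*m-1), b', c+1) = phi (2*m+1) (a, b' + (m+1), c) := by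
          obtain ⟨w, rfl⟩ : ∃ w, m = w + 2 := ⟨m - 2, by omega⟩
          have h3 : 3*(w+2) - 1 = 3*w + 5 := by omega
          rw [h3, phi_expand, phi_expand]; simp only; ring
        obtain ⟨a2, b2, c2, g1, g2, g3⟩ := reduce_c m (c+1) (a + (3*m-1)) b'
        obtain ⟨x, y, z, f1, f2, f3⟩ := ih (2*b2 + c2) (by omega) a2 b2 c2 le_rfl g1
        exact ⟨x, y, z, f1, f2, f3.trans (g3.trans hstep)⟩

lemma tset_nf (m : ℕ) (hm : 2 ≤ m) (s : ℕ) (hs : s ∈ Tset (2*m+1)) :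
    ∃ p : ℕ × ℕ × ℕ, p.2.2 ≤ 1 ∧ 2*p.2.1 + p.2.2 ≤ 2*m ∧ phi (2*m+1) p = s := by
  obtain ⟨a, b, c, rfl⟩ := hs
  have h : (a * (2*m+1) + b * (3*(2*m+1) - 2) + c * (3*(2*m+1) - 1)) = phi (2*m+1) (a,b,c) := rfl
  rw [h]
  obtain ⟨a', b', c', h1, h2, h3⟩ := reduce_c m c a b
  obtain ⟨x, y, z, f1, f2, f3⟩ := to_nf m hm (2*b'+c') a' b' c' le_rfl h1
  exact ⟨(x,y,z), f1, f2, f3.trans h3⟩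

lemma FT_eq (m : ℕ) (hm : 2 ≤ m) : FT (2*m+1) = 6*m*m - m := by
  unfold FT
  have h7 : 3*(2*m+1) - 7 = 6*m - 4 := by omega
  rw [h7]
  obtain ⟨w, rfl⟩ : ∃ w, m = w + 2 := ⟨m - 2, by omega⟩
  have h8 : 6*(w+2) - 4 = 6*w + 8 := by omega
  rw [h8]
  have h9 : (2*(w+2)+1) * (6*w+8) = 12*(w*w) + 46*w + 40 := by ring
  rw [h9]
  have h10 : 6*(w+2)*(w+2) = 6*(w*w) + 24*w + 24 := by ring
  rw [h10]
  omega

lemma F_not_in_T (m : ℕ) (hm : 2 ≤ m) : FT (2*m+1) ∉ Tset (2*m+1) := by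
  rintro ⟨a, b, c, hF⟩
  have h : FT (2*m+1) = phi (2*m+1) (a,b,c) := hF
  have e1 := phi_rr m (a,b,c)
  simp only [rr, sg] at e1
  rw [← h, FT_eq m hm] at e1
  -- FT = (2m+1)(3m-2) + 2
  have hFT : 6*m*m - m + 2 = (2*m+1) * (3*m-2) + 4 := by
    obtain ⟨w, rfl⟩ : ∃ w, m = w + 2 := ⟨m - 2, by omega⟩
    have : 3*(w+2) - 2 = 3*w+4 := by omega
    rw [this]
    have : (2*(w+2)+1)*(3*w+4) = 6*(w*w) + 23*w + 20 := by ring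
    rw [this]
    have : 6*(w+2)*(w+2) = 6*(w*w) + 24*w + 24 := by ring
    omega
  -- so (2m+1)*(a+3b+3c) = (2m+1)*(3m-2) + 2 + (2b+c)
  have e1' : 6*m*m - m + (2*b+c) = (2*m+1) * (a+3*b+3*c) := e1
  have e2 : (2*m+1) * (a+3*b+3*c) + 2 = (2*m+1)*(3*m-2) + 4 + (2*b+c) := by omega
  have hσ : 3*m - 2 + 1 ≤ a+3*b+3*c := by
    by_contra h'
    push_neg at h'
    have : (2*m+1) * (a+3*b+3*c) ≤ (2*m+1)*(3*m-2) := Nat.mul_le_mul_left _ (by omega)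
    omega
  obtain ⟨k, hk⟩ : ∃ k, a+3*b+3*c = (3*m-2) + 1 + k := ⟨a+3*b+3*c - (3*m-2) - 1, by omega⟩
  have hmul : (2*m+1) * ((3*m-2) + 1 + k) = (2*m+1)*(3*m-2) + (2*m+1) + (2*m+1)*k := by ring
  rw [hk, hmul] at e2
  have hbc : 2*b + c + 2 = 2*m - 1 + (2*m+1)*k + 2 := by omega
  rcases Nat.eq_zero_or_pos k with rfl | hkpos
  · -- 2b+c = 2m-1, a+3b+3c = 3m-1 : 2a + 3c = 1 impossible
    omega
  · have h1 : (2*m+1)*1 ≤ (2*m+1)*k := Nat.mul_le_mul_left _ hkpos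
    have h2 : 5*k ≤ (2*m+1)*k := Nat.mul_le_mul_right _ (by omega)
    -- 2(a+3b+3c) ≥ 3(2b+c)
    omega

lemma two_F (m : ℕ) (hm : 2 ≤ m) : phi (2*m+1) (3*m, m-2, 1) = FT (2*m+1) + FT (2*m+1) := by
  rw [FT_eq m hm, phi_expand]
  obtain ⟨w, rfl⟩ : ∃ w, m = w + 2 := ⟨m - 2, by omega⟩
  simp only
  have h1 : w + 2 - 2 = w := by omega
  rw [h1]
  have h2 : 6*(w+2)*(w+2) = 6*(w*w)+24*w+24 := by ring
  have h3 : 3*(w+2) * (2*(w+2)+1) = 6*(w*w) + 27*w + 30 := by ring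
  have h4 : w * (6*(w+2)+1) = 6*(w*w) + 13*w := by ring
  rw [h3, h4]
  omega

end Aux
namespace Aux

lemma rr_mk (x y z : ℕ) : rr (x,y,z) = 2*y + z := rfl

lemma id_b (m a b c : ℕ) (hm : 2 ≤ m) :
    phi (2*m+1) (a + (3*m+1), b, c) = phi (2*m+1) (a, b+1, c) + FT (2*m+1) := by
  rw [FT_eq m hm, phi_expand, phi_expand]
  obtain ⟨w, rfl⟩ : ∃ w, m = w + 2 := ⟨m - 2, by omega⟩
  simp only
  have h2 : 6*(w+2)*(w+2) = 6*(w*w)+24*w+24 := by ring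
  have h3 : (a + (3*(w+2)+1)) * (2*(w+2)+1) = a*(2*(w+2)+1) + 6*(w*w) + 29*w + 35 := by ring
  have h4 : (b+1) * (6*(w+2)+1) = b*(6*(w+2)+1) + 6*w + 13 := by ring
  rw [h3, h4]
  omega

lemma id_c1 (m a : ℕ) (hm : 2 ≤ m) :
    phi (2*m+1) (a + 2, m, 0) = phi (2*m+1) (a, 0, 1) + FT (2*m+1) := by
  rw [FT_eq m hm, phi_expand, phi_expand]
  obtain ⟨w, rfl⟩ : ∃ w, m = w + 2 := ⟨m - 2, by omega⟩
  simp only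
  have h2 : 6*(w+2)*(w+2) = 6*(w*w)+24*w+24 := by ring
  have h3 : (a+2) * (2*(w+2)+1) = a*(2*(w+2)+1) + 4*w + 10 := by ring
  have h4 : (w+2) * (6*(w+2)+1) = 6*(w*w) + 25*w + 26 := by ring
  rw [h3, h4]
  omega

lemma id_0 (m a : ℕ) (hm : 2 ≤ m) :
    phi (2*m+1) (a, m-1, 1) = phi (2*m+1) (a+1, 0, 0) + FT (2*m+1) := by
  rw [FT_eq m hm, phi_expand, phi_expand]
  obtain ⟨w, rfl⟩ : ∃ w, m = w + 2 := ⟨m - 2, by omega⟩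
  simp only
  have h1 : w + 2 - 1 = w + 1 := by omega
  rw [h1]
  have h2 : 6*(w+2)*(w+2) = 6*(w*w)+24*w+24 := by ring
  have h3 : (w+1) * (6*(w+2)+1) = 6*(w*w) + 19*w + 13 := by ring
  have h4 : (a+1) * (2*(w+2)+1) = a*(2*(w+2)+1) + 2*w + 5 := by ring
  rw [h3, h4]
  omega

lemma zero_mem_T (n : ℕ) : 0 ∈ Tset n := ⟨0, 0, 0, by simp⟩

lemma ap_eq (m : ℕ) (hm : 2 ≤ m) : Ap (2*m+1) = phi (2*m+1) '' (Fset (2*m+1)) := by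
  ext s
  constructor
  · rintro ⟨hsS, hno⟩
    have hsT : s ∈ Tset (2*m+1) := by
      rcases hsS with h | h
      · exact h
      · exfalso
        exact hno ⟨0, Or.inl (zero_mem_T _), by simpa using h.symm⟩
    obtain ⟨⟨x, y, z⟩, hz, hr, hphi⟩ := tset_nf m hm s hsT
    simp only at hz hr
    -- case exclusions
    by_cases c1 : z = 1 ∧ y + 1 = m
    · exfalso
      apply hno
      refine ⟨phi (2*m+1) (x+1, 0, 0), Or.inl (phi_mem_T _ _), ?_⟩
      have hy : y = m - 1 := by omega
      rw [← hphi, c1.1, hy]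
      exact (id_0 m x hm).symm
    by_cases c2 : z = 0 ∧ y = m ∧ 2 ≤ x
    · exfalso
      apply hno
      obtain ⟨u, hu⟩ : ∃ u, x = u + 2 := ⟨x - 2, by omega⟩
      refine ⟨phi (2*m+1) (u, 0, 1), Or.inl (phi_mem_T _ _), ?_⟩
      rw [← hphi, ← id_c1 m u hm, hu, c2.1, c2.2.1]
    by_cases c3 : 2*y + z ≤ 2*m - 2 ∧ 3*m + 1 ≤ x
    · exfalso
      apply hno
      obtain ⟨u, hu⟩ : ∃ u, x = u + (3*m+1) := ⟨x - (3*m+1), by omega⟩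
      have hy1 : 1 ≤ y ∨ y = 0 := by omega
      -- use id_b with b+1 = y is only possible if y ≥ 1; if y = 0 we still can use id_b? no.
      -- witness phi(u, 1, z)?? No: we need t + F = phi (x, y, z) = phi (u + 3m+1, y, z)
      -- id_b : phi (u + 3m+1, b, c) = phi (u, b+1, c) + F, so t = phi... wrong direction.
      -- t should satisfy t + F = s. t = phi (x - (3m+1), y+1, z). Use id_b with a := u, b := y:
      refine ⟨phi (2*m+1) (u, y+1, z), Or.inl (phi_mem_T _ _), ?_⟩
      rw [← hphi, hu, id_b m u y z hm]
    by_cases c4 : x = 3*m ∧ y + 2 = m ∧ z = 1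
    · exfalso
      apply hno
      obtain ⟨e1, e2, e3⟩ := c4
      refine ⟨FT (2*m+1), Or.inr rfl, ?_⟩
      have hy : y = m - 2 := by omega
      rw [← hphi, e1, e3, hy, two_F m hm]
    · refine ⟨(x,y,z), ?_, hphi⟩
      rw [fset_iff m hm]
      simp only
      omega
  · rintro ⟨⟨x, y, z⟩, hpF, rfl⟩
    have hbounds : z ≤ 1 ∧ 2*y + z ≤ 2*m ∧ x ≤ 3*m := by
      rw [fset_iff m hm] at hpF
      simp only at hpF
      omega
    obtain ⟨hz, hr, hx⟩ := hbounds
    refine ⟨Or.inl (phi_mem_T _ _), ?_⟩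
    rintro ⟨t, htS, hteq⟩
    rcases htS with htT | htF
    · obtain ⟨⟨a, b, c⟩, gz, gr, gphi⟩ := tset_nf m hm t htT
      simp only at gz gr
      rcases Nat.eq_zero_or_pos b with hb0 | hbpos
      · rcases Nat.eq_zero_or_pos c with hc0 | hcpos
        · rcases Nat.eq_zero_or_pos a with ha0 | hapos
          · -- t = 0, s = F, contradiction with F ∉ T
            apply F_not_in_T m hm
            have : phi (2*m+1) (x,y,z) = FT (2*m+1) := by
              rw [← hteq, ← gphi, ha0, hb0, hc0]
              simp [phi]
            rw [← this]
            exact phi_mem_T _ _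
          · -- t = a*n, a ≥ 1 : s = phi (a-1, m-1, 1)
            obtain ⟨a', rfl⟩ : ∃ a', a = a' + 1 := ⟨a - 1, by omega⟩
            have hs' : phi (2*m+1) (x,y,z) = phi (2*m+1) (a', m-1, 1) := by
              rw [← hteq, ← gphi, hb0, hc0, id_0 m a' hm]
            have := nf_unique m (x,y,z) (a', m-1, 1) (by rw [rr_mk]; omega)
              (by rw [rr_mk]; omega) (by simpa using hz) (by simp) hs'
            rw [fset_iff m hm] at hpF
            simp only [Prod.mk.injEq] at this hpF
            omega
        · -- c = 1, b = 0 : s = phi (a+2, m, 0)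
          have hc1 : c = 1 := by omega
          have hs' : phi (2*m+1) (x,y,z) = phi (2*m+1) (a+2, m, 0) := by
            rw [← hteq, ← gphi, hb0, hc1, id_c1 m a hm]
          have := nf_unique m (x,y,z) (a+2, m, 0) (by rw [rr_mk]; omega)
            (by rw [rr_mk]; omega) (by simpa using hz) (by simp) hs'
          rw [fset_iff m hm] at hpF
          simp only [Prod.mk.injEq] at this hpF
          omega
      · -- b ≥ 1 : s = phi (a + 3m+1, b-1, c)
        obtain ⟨b', rfl⟩ : ∃ b', b = b' + 1 := ⟨b - 1, by omega⟩
        have hs' : phi (2*m+1) (x,y,z) = phi (2*m+1) (a + (3*m+1), b', c) := by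
          rw [← hteq, ← gphi, id_b m a b' c hm]
        have := nf_unique m (x,y,z) (a + (3*m+1), b', c) (by rw [rr_mk]; omega)
          (by rw [rr_mk]; omega) (by simpa using hz) (by simpa using gz) hs'
        rw [fset_iff m hm] at hpF
        simp only [Prod.mk.injEq] at this hpF
        omega
    · -- t = F : s = 2F = phi (3m, m-2, 1)
      have hs' : phi (2*m+1) (x,y,z) = phi (2*m+1) (3*m, m-2, 1) := by
        rw [← hteq, htF, two_F m hm]
      have := nf_unique m (x,y,z) (3*m, m-2, 1) (by rw [rr_mk]; omega)
        (by rw [rr_mk]; omega) (by simpa using hz) (by simp) hs'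
      rw [fset_iff m hm] at hpF
      simp only [Prod.mk.injEq] at this hpF
      omega

end Aux
namespace Aux

def P1 (m j : ℕ) : Finset (ℕ×ℕ×ℕ) := (Finset.Icc (3*j+3) (3*m)).image fun x => (x, j, 0)
def P2 (m j : ℕ) : Finset (ℕ×ℕ×ℕ) :=
  ((Finset.Icc (3*j) (3*j+2)) ×ˢ (Finset.Icc j (m-1))).image fun q => (q.1, q.2, 0)
def P3 (m : ℕ) : Finset (ℕ×ℕ×ℕ) := {(0, m, 0), (1, m, 0)}
def P4 (m j : ℕ) : Finset (ℕ×ℕ×ℕ) := (Finset.Icc (3*j+3) (3*m-2)).image fun x => (x, j, 1)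
def P5 (m j : ℕ) : Finset (ℕ×ℕ×ℕ) :=
  ((Finset.Icc (3*j) (3*j+2)) ×ˢ (Finset.Icc j (m-2))).image fun q => (q.1, q.2, 1)
def P6 (m j : ℕ) : Finset (ℕ×ℕ×ℕ) := {(3*m-1, j-1, 1)}
def P7 (m j : ℕ) : Finset (ℕ×ℕ×ℕ) := {(3*m, j-1, 1)}

def G (m j : ℕ) : Finset (ℕ×ℕ×ℕ) :=
  P1 m j ∪ P2 m j ∪ (if j = 0 then P3 m else ∅) ∪
  (if j + 2 ≤ m then P4 m j else ∅) ∪ (if j + 2 ≤ m then P5 m j else ∅) ∪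
  (if 1 ≤ j then P6 m j else ∅) ∪ (if 1 ≤ j ∧ j + 2 ≤ m then P7 m j else ∅)

lemma mem_P1 (m j : ℕ) (x y z : ℕ) :
    (x,y,z) ∈ P1 m j ↔ 3*j+3 ≤ x ∧ x ≤ 3*m ∧ y = j ∧ z = 0 := by
  constructor
  · intro h
    obtain ⟨w, hw, he⟩ := Finset.mem_image.mp h
    obtain ⟨h1, h2⟩ := Finset.mem_Icc.mp hw
    obtain ⟨rfl, rfl, rfl⟩ : w = x ∧ j = y ∧ 0 = z := by simpa [Prod.ext_iff] using he
    exact ⟨h1, h2, rfl, rfl⟩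
  · rintro ⟨h1, h2, rfl, rfl⟩
    exact Finset.mem_image.mpr ⟨x, Finset.mem_Icc.mpr ⟨h1, h2⟩, rfl⟩

lemma mem_P2 (m j : ℕ) (x y z : ℕ) :
    (x,y,z) ∈ P2 m j ↔ (3*j ≤ x ∧ x ≤ 3*j+2) ∧ (j ≤ y ∧ y ≤ m-1) ∧ z = 0 := by
  constructor
  · intro h
    obtain ⟨⟨w1, w2⟩, hw, he⟩ := Finset.mem_image.mp h
    rw [Finset.mem_product] at hw
    obtain ⟨hw1, hw2⟩ := hw
    obtain ⟨rfl, rfl, rfl⟩ : w1 = x ∧ w2 = y ∧ 0 = z := by simpa [Prod.ext_iff] using he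
    exact ⟨Finset.mem_Icc.mp hw1, Finset.mem_Icc.mp hw2, rfl⟩
  · rintro ⟨h1, h2, rfl⟩
    exact Finset.mem_image.mpr ⟨(x, y),
      Finset.mem_product.mpr ⟨Finset.mem_Icc.mpr h1, Finset.mem_Icc.mpr h2⟩, rfl⟩

lemma mem_P3 (m : ℕ) (x y z : ℕ) :
    (x,y,z) ∈ P3 m ↔ (x = 0 ∨ x = 1) ∧ y = m ∧ z = 0 := by
  simp [P3, Prod.ext_iff]
  omega

lemma mem_P4 (m j : ℕ) (x y z : ℕ) :
    (x,y,z) ∈ P4 m j ↔ 3*j+3 ≤ x ∧ x ≤ 3*m-2 ∧ y = j ∧ z = 1 := by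
  constructor
  · intro h
    obtain ⟨w, hw, he⟩ := Finset.mem_image.mp h
    obtain ⟨h1, h2⟩ := Finset.mem_Icc.mp hw
    obtain ⟨rfl, rfl, rfl⟩ : w = x ∧ j = y ∧ 1 = z := by simpa [Prod.ext_iff] using he
    exact ⟨h1, h2, rfl, rfl⟩
  · rintro ⟨h1, h2, rfl, rfl⟩
    exact Finset.mem_image.mpr ⟨x, Finset.mem_Icc.mpr ⟨h1, h2⟩, rfl⟩

lemma mem_P5 (m j : ℕ) (x y z : ℕ) :
    (x,y,z) ∈ P5 m j ↔ (3*j ≤ x ∧ x ≤ 3*j+2) ∧ (j ≤ y ∧ y ≤ m-2) ∧ z = 1 := by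
  constructor
  · intro h
    obtain ⟨⟨w1, w2⟩, hw, he⟩ := Finset.mem_image.mp h
    rw [Finset.mem_product] at hw
    obtain ⟨hw1, hw2⟩ := hw
    obtain ⟨rfl, rfl, rfl⟩ : w1 = x ∧ w2 = y ∧ 1 = z := by simpa [Prod.ext_iff] using he
    exact ⟨Finset.mem_Icc.mp hw1, Finset.mem_Icc.mp hw2, rfl⟩
  · rintro ⟨h1, h2, rfl⟩
    exact Finset.mem_image.mpr ⟨(x, y),
      Finset.mem_product.mpr ⟨Finset.mem_Icc.mpr h1, Finset.mem_Icc.mpr h2⟩, rfl⟩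

lemma mem_P6 (m j : ℕ) (x y z : ℕ) :
    (x,y,z) ∈ P6 m j ↔ x = 3*m-1 ∧ y = j-1 ∧ z = 1 := by
  simp [P6, Prod.mk.injEq]

lemma mem_P7 (m j : ℕ) (x y z : ℕ) :
    (x,y,z) ∈ P7 m j ↔ x = 3*m ∧ y = j-1 ∧ z = 1 := by
  simp [P7, Prod.mk.injEq]

lemma mem_ite_empty {α : Type*} {c : Prop} [Decidable c] {s : Finset α} {a : α} :
    (a ∈ if c then s else ∅) ↔ c ∧ a ∈ s := by
  split_ifs with h <;> simp [h]

lemma mem_G (m j : ℕ) (x y z : ℕ) :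
    (x,y,z) ∈ G m j ↔
      ((3*j+3 ≤ x ∧ x ≤ 3*m ∧ y = j ∧ z = 0) ∨
       ((3*j ≤ x ∧ x ≤ 3*j+2) ∧ (j ≤ y ∧ y ≤ m-1) ∧ z = 0) ∨
       (j = 0 ∧ (x = 0 ∨ x = 1) ∧ y = m ∧ z = 0) ∨
       (j + 2 ≤ m ∧ 3*j+3 ≤ x ∧ x ≤ 3*m-2 ∧ y = j ∧ z = 1) ∨
       (j + 2 ≤ m ∧ (3*j ≤ x ∧ x ≤ 3*j+2) ∧ (j ≤ y ∧ y ≤ m-2) ∧ z = 1) ∨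
       (1 ≤ j ∧ x = 3*m-1 ∧ y = j-1 ∧ z = 1) ∨
       ((1 ≤ j ∧ j + 2 ≤ m) ∧ x = 3*m ∧ y = j-1 ∧ z = 1)) := by
  simp only [G, Finset.mem_union, mem_ite_empty, mem_P1, mem_P2, mem_P3, mem_P4,
    mem_P5, mem_P6, mem_P7]
  constructor
  · rintro ((((((h|h)|h)|h)|h)|h)|h)
    exacts [Or.inl h, Or.inr (Or.inl h), Or.inr (Or.inr (Or.inl h)),
      Or.inr (Or.inr (Or.inr (Or.inl h))), Or.inr (Or.inr (Or.inr (Or.inr (Or.inl h)))),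
      Or.inr (Or.inr (Or.inr (Or.inr (Or.inr (Or.inl h))))),
      Or.inr (Or.inr (Or.inr (Or.inr (Or.inr (Or.inr h)))))]
  · rintro (h|h|h|h|h|h|h)
    exacts [Or.inl (Or.inl (Or.inl (Or.inl (Or.inl (Or.inl h))))),
      Or.inl (Or.inl (Or.inl (Or.inl (Or.inl (Or.inr h))))),
      Or.inl (Or.inl (Or.inl (Or.inl (Or.inr h)))),
      Or.inl (Or.inl (Or.inl (Or.inr h))),
      Or.inl (Or.inl (Or.inr h)),
      Or.inl (Or.inr h),
      Or.inr h]

end Aux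
namespace Aux

lemma E_eq_G (m j : ℕ) (hm : 2 ≤ m) (hj : j + 1 ≤ m) :
    {p : ℕ×ℕ×ℕ | p ∈ Fset (2*m+1) ∧ cnt m p = j + 1} = ↑(G m j) := by
  ext ⟨x, y, z⟩
  simp only [Set.mem_setOf_eq, Finset.mem_coe, mem_G]
  rw [fset_iff m hm]
  rw [show cnt m (x,y,z) = min (x/3) y + 1 + (if z = 1 ∧ 3*m-1 ≤ x then 1 else 0) from rfl]
  simp only
  obtain ⟨q, r, hqr, hr3⟩ : ∃ q r, x = 3*q + r ∧ r < 3 := ⟨x/3, x%3, by omega, by omega⟩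
  rw [show x / 3 = q from by omega]
  by_cases hc : z = 1 ∧ 3*m-1 ≤ x
  · rw [if_pos hc]
    constructor
    · rintro ⟨(h|h|h|h), he⟩
      · exact absurd h.1 (by omega)
      · exact absurd h.1 (by omega)
      · rcases (by omega : x = 3*m-1 ∨ x = 3*m) with h' | h'
        · exact Or.inr (Or.inr (Or.inr (Or.inr (Or.inr (Or.inl
            ⟨by omega, by omega, by omega, (by omega)⟩)))))
        · exact Or.inr (Or.inr (Or.inr (Or.inr (Or.inr (Or.inr
            ⟨⟨by omega, by omega⟩, by omega, by omega, (by omega)⟩)))))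
      · exact Or.inr (Or.inr (Or.inr (Or.inr (Or.inr (Or.inl
          ⟨by omega, by omega, by omega, (by omega)⟩)))))
    · rintro (h|h|h|h|h|h|h)
      · exact absurd hc.1 (by omega)
      · exact absurd hc.1 (by omega)
      · exact absurd hc.1 (by omega)
      · exact absurd hc.2 (by omega)
      · exact absurd hc.2 (by omega)
      · by_cases hy : y + 3 ≤ m
        · exact ⟨Or.inr (Or.inr (Or.inl ⟨(by omega), by omega, (by omega)⟩)), by omega⟩
        · exact ⟨Or.inr (Or.inr (Or.inr ⟨(by omega), by omega, by omega⟩)), by omega⟩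
      · exact ⟨Or.inr (Or.inr (Or.inl ⟨(by omega), by omega, by omega⟩)), by omega⟩
  · rw [if_neg hc]
    constructor
    · rintro ⟨(h|h|h|h), he⟩
      · by_cases hxd : x ≤ 3*j+2
        · exact Or.inr (Or.inl ⟨⟨by omega, (by omega)⟩, ⟨by omega, by omega⟩, (by omega)⟩)
        · exact Or.inl ⟨by omega, by omega, by omega, (by omega)⟩
      · exact Or.inr (Or.inr (Or.inl ⟨by omega, by omega, (by omega), (by omega)⟩))
      · by_cases hxd : x ≤ 3*j+2
        · exact Or.inr (Or.inr (Or.inr (Or.inr (Or.inl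
            ⟨by omega, ⟨by omega, (by omega)⟩, ⟨by omega, by omega⟩, (by omega)⟩))))
        · exact Or.inr (Or.inr (Or.inr (Or.inl
            ⟨by omega, by omega, by omega, by omega, (by omega)⟩)))
      · by_cases hxd : x ≤ 3*j+2
        · exact Or.inr (Or.inr (Or.inr (Or.inr (Or.inl
            ⟨by omega, ⟨by omega, (by omega)⟩, ⟨by omega, by omega⟩, (by omega)⟩))))
        · exact Or.inr (Or.inr (Or.inr (Or.inl
            ⟨by omega, by omega, by omega, by omega, (by omega)⟩)))
    · rintro (h|h|h|h|h|h|h)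
      · exact ⟨Or.inl ⟨(by omega), by omega, by omega⟩, by omega⟩
      · exact ⟨Or.inl ⟨(by omega), by omega, by omega⟩, by omega⟩
      · exact ⟨Or.inr (Or.inl ⟨(by omega), by omega, by omega⟩), by omega⟩
      · by_cases hy : j + 3 ≤ m
        · exact ⟨Or.inr (Or.inr (Or.inl ⟨(by omega), by omega, by omega⟩)), by omega⟩
        · exact ⟨Or.inr (Or.inr (Or.inr ⟨(by omega), by omega, by omega⟩)), by omega⟩
      · by_cases hy : y + 3 ≤ m
        · exact ⟨Or.inr (Or.inr (Or.inl ⟨(by omega), by omega, by omega⟩)), by omega⟩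
        · exact ⟨Or.inr (Or.inr (Or.inr ⟨(by omega), by omega, by omega⟩)), by omega⟩
      · exact absurd ⟨by omega, by omega⟩ hc
      · exact absurd ⟨by omega, by omega⟩ hc

lemma card_G (m j : ℕ) (hm : 2 ≤ m) (hj : j + 1 ≤ m) :
    (G m j).card = 12*m - 12*j - 7 := by
  have hinj1 : Function.Injective (fun x : ℕ => (x, j, (0:ℕ))) := by
    intro a b h; simpa using h
  have hinj1' : Function.Injective (fun x : ℕ => (x, j, (1:ℕ))) := by
    intro a b h; simpa using h
  have hinj2 : Function.Injective (fun q : ℕ × ℕ => (q.1, q.2, (0:ℕ))) := by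
    rintro ⟨a,b⟩ ⟨c,d⟩ h; simpa [Prod.ext_iff] using h
  have hinj2' : Function.Injective (fun q : ℕ × ℕ => (q.1, q.2, (1:ℕ))) := by
    rintro ⟨a,b⟩ ⟨c,d⟩ h; simpa [Prod.ext_iff] using h
  have hP1 : (P1 m j).card = 3*m + 1 - (3*j+3) := by
    rw [P1, Finset.card_image_of_injective _ hinj1, Nat.card_Icc]
  have hP2 : (P2 m j).card = 3 * (m - 1 + 1 - j) := by
    rw [P2, Finset.card_image_of_injective _ hinj2, Finset.card_product, Nat.card_Icc,
      Nat.card_Icc, show 3*j+2+1-3*j = 3 from by omega]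
  have hP3 : (P3 m).card = 2 := by
    rw [P3]
    rw [Finset.card_insert_of_notMem (by simp), Finset.card_singleton]
  have hP4 : (P4 m j).card = 3*m - 2 + 1 - (3*j+3) := by
    rw [P4, Finset.card_image_of_injective _ hinj1', Nat.card_Icc]
  have hP5 : (P5 m j).card = 3 * (m - 2 + 1 - j) := by
    rw [P5, Finset.card_image_of_injective _ hinj2', Finset.card_product, Nat.card_Icc,
      Nat.card_Icc, show 3*j+2+1-3*j = 3 from by omega]
  have hP6 : (P6 m j).card = 1 := Finset.card_singleton _
  have hP7 : (P7 m j).card = 1 := Finset.card_singleton _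
  have hsub : ∀ {c : Prop} [inst : Decidable c] (B : Finset (ℕ×ℕ×ℕ)),
      (if c then B else ∅) ⊆ B := by
    intro c inst B
    split_ifs
    · exact Finset.Subset.refl _
    · exact Finset.empty_subset _
  have d12 : Disjoint (P1 m j) (P2 m j) := by
    rw [Finset.disjoint_left]; rintro ⟨x,y,z⟩ ha hb
    rw [mem_P1] at ha; rw [mem_P2] at hb; omega
  have d13 : Disjoint (P1 m j) (P3 m) := by
    rw [Finset.disjoint_left]; rintro ⟨x,y,z⟩ ha hb
    rw [mem_P1] at ha; rw [mem_P3] at hb; omega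
  have d23 : Disjoint (P2 m j) (P3 m) := by
    rw [Finset.disjoint_left]; rintro ⟨x,y,z⟩ ha hb
    rw [mem_P2] at ha; rw [mem_P3] at hb; omega
  have d14 : Disjoint (P1 m j) (P4 m j) := by
    rw [Finset.disjoint_left]; rintro ⟨x,y,z⟩ ha hb
    rw [mem_P1] at ha; rw [mem_P4] at hb; omega
  have d24 : Disjoint (P2 m j) (P4 m j) := by
    rw [Finset.disjoint_left]; rintro ⟨x,y,z⟩ ha hb
    rw [mem_P2] at ha; rw [mem_P4] at hb; omega
  have d34 : Disjoint (P3 m) (P4 m j) := by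
    rw [Finset.disjoint_left]; rintro ⟨x,y,z⟩ ha hb
    rw [mem_P3] at ha; rw [mem_P4] at hb; omega
  have d15 : Disjoint (P1 m j) (P5 m j) := by
    rw [Finset.disjoint_left]; rintro ⟨x,y,z⟩ ha hb
    rw [mem_P1] at ha; rw [mem_P5] at hb; omega
  have d25 : Disjoint (P2 m j) (P5 m j) := by
    rw [Finset.disjoint_left]; rintro ⟨x,y,z⟩ ha hb
    rw [mem_P2] at ha; rw [mem_P5] at hb; omega
  have d35 : Disjoint (P3 m) (P5 m j) := by
    rw [Finset.disjoint_left]; rintro ⟨x,y,z⟩ ha hb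
    rw [mem_P3] at ha; rw [mem_P5] at hb; omega
  have d45 : Disjoint (P4 m j) (P5 m j) := by
    rw [Finset.disjoint_left]; rintro ⟨x,y,z⟩ ha hb
    rw [mem_P4] at ha; rw [mem_P5] at hb; omega
  have d16 : Disjoint (P1 m j) (P6 m j) := by
    rw [Finset.disjoint_left]; rintro ⟨x,y,z⟩ ha hb
    rw [mem_P1] at ha; rw [mem_P6] at hb; omega
  have d26 : Disjoint (P2 m j) (P6 m j) := by
    rw [Finset.disjoint_left]; rintro ⟨x,y,z⟩ ha hb
    rw [mem_P2] at ha; rw [mem_P6] at hb; omega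
  have d36 : Disjoint (P3 m) (P6 m j) := by
    rw [Finset.disjoint_left]; rintro ⟨x,y,z⟩ ha hb
    rw [mem_P3] at ha; rw [mem_P6] at hb; omega
  have d46 : Disjoint (P4 m j) (P6 m j) := by
    rw [Finset.disjoint_left]; rintro ⟨x,y,z⟩ ha hb
    rw [mem_P4] at ha; rw [mem_P6] at hb; omega
  have d56 : Disjoint (P5 m j) (P6 m j) := by
    rw [Finset.disjoint_left]; rintro ⟨x,y,z⟩ ha hb
    rw [mem_P5] at ha; rw [mem_P6] at hb; omega
  have d17 : Disjoint (P1 m j) (P7 m j) := by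
    rw [Finset.disjoint_left]; rintro ⟨x,y,z⟩ ha hb
    rw [mem_P1] at ha; rw [mem_P7] at hb; omega
  have d27 : Disjoint (P2 m j) (P7 m j) := by
    rw [Finset.disjoint_left]; rintro ⟨x,y,z⟩ ha hb
    rw [mem_P2] at ha; rw [mem_P7] at hb; omega
  have d37 : Disjoint (P3 m) (P7 m j) := by
    rw [Finset.disjoint_left]; rintro ⟨x,y,z⟩ ha hb
    rw [mem_P3] at ha; rw [mem_P7] at hb; omega
  have d47 : Disjoint (P4 m j) (P7 m j) := by
    rw [Finset.disjoint_left]; rintro ⟨x,y,z⟩ ha hb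
    rw [mem_P4] at ha; rw [mem_P7] at hb; omega
  have d57 : Disjoint (P5 m j) (P7 m j) := by
    rw [Finset.disjoint_left]; rintro ⟨x,y,z⟩ ha hb
    rw [mem_P5] at ha; rw [mem_P7] at hb; omega
  have d67 : Disjoint (P6 m j) (P7 m j) := by
    rw [Finset.disjoint_left]; rintro ⟨x,y,z⟩ ha hb
    rw [mem_P6] at ha; rw [mem_P7] at hb; omega
  unfold G
  rw [Finset.card_union_of_disjoint (by
    refine Finset.disjoint_union_left.mpr ⟨Finset.disjoint_union_left.mpr
      ⟨Finset.disjoint_union_left.mpr ⟨Finset.disjoint_union_left.mpr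
        ⟨Finset.disjoint_union_left.mpr ⟨?_, ?_⟩, ?_⟩, ?_⟩, ?_⟩, ?_⟩
    exacts [d17.mono_right (hsub _), d27.mono_right (hsub _),
      (d37.mono_right (hsub _)).mono_left (hsub _),
      (d47.mono_right (hsub _)).mono_left (hsub _),
      (d57.mono_right (hsub _)).mono_left (hsub _),
      (d67.mono_right (hsub _)).mono_left (hsub _)])]
  rw [Finset.card_union_of_disjoint (by
    refine Finset.disjoint_union_left.mpr ⟨Finset.disjoint_union_left.mpr
      ⟨Finset.disjoint_union_left.mpr ⟨Finset.disjoint_union_left.mpr ⟨?_, ?_⟩, ?_⟩, ?_⟩, ?_⟩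
    exacts [d16.mono_right (hsub _), d26.mono_right (hsub _),
      (d36.mono_right (hsub _)).mono_left (hsub _),
      (d46.mono_right (hsub _)).mono_left (hsub _),
      (d56.mono_right (hsub _)).mono_left (hsub _)])]
  rw [Finset.card_union_of_disjoint (by
    refine Finset.disjoint_union_left.mpr ⟨Finset.disjoint_union_left.mpr
      ⟨Finset.disjoint_union_left.mpr ⟨?_, ?_⟩, ?_⟩, ?_⟩
    exacts [d15.mono_right (hsub _), d25.mono_right (hsub _),
      (d35.mono_right (hsub _)).mono_left (hsub _),
      (d45.mono_right (hsub _)).mono_left (hsub _)])]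
  rw [Finset.card_union_of_disjoint (by
    refine Finset.disjoint_union_left.mpr ⟨Finset.disjoint_union_left.mpr ⟨?_, ?_⟩, ?_⟩
    exacts [d14.mono_right (hsub _), d24.mono_right (hsub _),
      (d34.mono_right (hsub _)).mono_left (hsub _)])]
  rw [Finset.card_union_of_disjoint (by
    refine Finset.disjoint_union_left.mpr ⟨?_, ?_⟩
    exacts [d13.mono_right (hsub _), d23.mono_right (hsub _)])]
  rw [Finset.card_union_of_disjoint d12]
  -- now a sum of cards with ite
  rcases Nat.eq_zero_or_pos j with rfl | hj1
  · rw [if_pos rfl, if_pos (by omega), if_pos (by omega), if_neg (by omega), if_neg (by omega)]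
    simp only [Finset.card_empty]
    omega
  · rcases Nat.lt_or_ge (j+1) m with hjm | hjm
    · rw [if_neg (by omega), if_pos (by omega), if_pos (by omega), if_pos (by omega),
        if_pos (by omega)]
      simp only [Finset.card_empty]
      omega
    · have hje : j + 1 = m := by omega
      rw [if_neg (by omega), if_neg (by omega), if_neg (by omega), if_pos (by omega),
        if_neg (by omega)]
      simp only [Finset.card_empty]
      omega

lemma mset_ncard (m i : ℕ) (hm : 2 ≤ m) (hi1 : 1 ≤ i) (him : i ≤ m) :
    (Mset (2*m+1) i).ncard = 12*m - 12*(i-1) - 7 := by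
  have hEq : Mset (2*m+1) i = phi (2*m+1) '' {p | p ∈ Fset (2*m+1) ∧ cnt m p = i} := by
    ext s
    constructor
    · rintro ⟨hAp, hcard⟩
      rw [ap_eq m hm] at hAp
      obtain ⟨⟨x,y,z⟩, hpF, rfl⟩ := hAp
      have hb := (fset_iff m hm (x,y,z)).mp hpF
      simp only at hb
      refine ⟨(x,y,z), ⟨hpF, ?_⟩, rfl⟩
      rw [← zfac_ncard m x y z hm (by omega) (by omega) (by omega)]
      exact hcard
    · rintro ⟨⟨x,y,z⟩, ⟨hpF, hcnt⟩, rfl⟩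
      have hb := (fset_iff m hm (x,y,z)).mp hpF
      simp only at hb
      refine ⟨?_, ?_⟩
      · rw [ap_eq m hm]; exact ⟨(x,y,z), hpF, rfl⟩
      · rw [zfac_ncard m x y z hm (by omega) (by omega) (by omega)]
        exact hcnt
  rw [hEq]
  have hinj : Set.InjOn (phi (2*m+1)) {p | p ∈ Fset (2*m+1) ∧ cnt m p = i} := by
    rintro ⟨x,y,z⟩ ⟨hp, _⟩ ⟨a,b,c⟩ ⟨hq, _⟩ h
    have hb1 := (fset_iff m hm (x,y,z)).mp hp
    have hb2 := (fset_iff m hm (a,b,c)).mp hq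
    simp only at hb1 hb2
    exact nf_unique m (x,y,z) (a,b,c) (by rw [rr_mk]; omega) (by rw [rr_mk]; omega)
      (by simp only; omega) (by simp only; omega) h
  rw [Set.ncard_image_of_injOn hinj]
  have hE := E_eq_G m (i-1) hm (by omega)
  rw [show i - 1 + 1 = i from by omega] at hE
  rw [hE, Set.ncard_coe_finset, card_G m (i-1) hm (by omega)]

end Aux


/-- For `1 ≤ i ≤ (n-1)/2`, the set `M_i` has exactly `6n - 12i - 1` elements. -/
theorem stmt11 (n : ℕ) (hodd : Odd n) (hn : 5 ≤ n) :
    ∀ i : ℕ, 1 ≤ i → i ≤ (n - 1) / 2 → (Mset n i).ncard = 6 * n - 12 * i - 1 := by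
  obtain ⟨m, rfl⟩ := hodd
  have hm : 2 ≤ m := by omega
  intro i h1 h2
  have h2' : i ≤ m := by omega
  rw [Aux.mset_ncard m i hm h1 h2']
  omega
end

section
/- Let n be an odd integer with n ≥ 5, T = {an + b(3n−2) + c(3n−1) : a,b,c ∈ ℕ}, F(T) = n(3n−7)/2 + 2, and S = T ∪ {F(T)}. Let s ∈ Ap(S, F(T)) and (α,β,γ) ∈ Z(s). Then nf(s) = (α,β,γ) if and only if β ≤ (n−1)/2 and γ ∈ {0,1}. -/
/-- A factorization `(α,β,γ)` of `s ∈ Ap(S, F(T))` is the normal form of `s` iff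
`β ≤ (n-1)/2` and `γ ∈ {0,1}`. -/
theorem stmt12 (n : ℕ) (hodd : Odd n) (hn : 5 ≤ n)
    (s : ℕ) (hs : s ∈ Ap n) (p : ℕ × ℕ × ℕ) (hp : p ∈ Zfac n s) :
    IsNF n s p ↔ (p.2.1 ≤ (n - 1) / 2 ∧ (p.2.2 = 0 ∨ p.2.2 = 1)) := by
  obtain ⟨m, hm⟩ := hodd
  obtain ⟨k, hk⟩ : ∃ k, n = 2 * k + 5 := ⟨m - 2, by omega⟩
  subst hk
  obtain ⟨x, y, z⟩ := p
  have hn3 : 3 * (2 * k + 5) - 2 = 6 * k + 13 := by omega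
  have hn4 : 3 * (2 * k + 5) - 1 = 6 * k + 14 := by omega
  have hFT : FT (2 * k + 5) = 6 * k * k + 23 * k + 22 := by
    unfold FT
    have h1 : 3 * (2 * k + 5) - 7 = 6 * k + 8 := by omega
    rw [h1]
    have h2 : (2 * k + 5) * (6 * k + 8) = (6 * k * k + 23 * k + 20) * 2 := by ring
    rw [h2, Nat.mul_div_cancel _ (by norm_num)]
  simp only [Zfac, Set.mem_setOf_eq, phi, hn3, hn4] at hp
  constructor
  · rintro ⟨-, hz, hy, -⟩
    exact ⟨by omega, by omega⟩
  · rintro ⟨hy, hz⟩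
    refine ⟨by simpa [Zfac, phi, hn3, hn4] using hp, by omega, by omega, ?_⟩
    rw [hn4]
    by_contra hx
    push_neg at hx
    obtain ⟨r, hr⟩ : ∃ r, x = r + (3 * k + 7) := ⟨x - (3 * k + 7), by omega⟩
    subst hr
    apply hs.2
    refine ⟨r * (2 * k + 5) + (y + 1) * (6 * k + 13) + z * (6 * k + 14),
      Or.inl ⟨r, y + 1, z, by rw [hn3, hn4]⟩, ?_⟩
    rw [hFT, ← hp]
    ring
end

section
/- Let n be an odd integer with n ≥ 5, T = {an + b(3n−2) + c(3n−1) : a,b,c ∈ ℕ}, F(T) = n(3n−7)/2 + 2, and S = T ∪ {F(T)}. Let i be a positive integer and let s, s' ∈ M_i. Then the following are equivalent: (1) nf(s') < nf(s) in the componentwise strict order on ℕ³; (2) for every factorization ζ ∈ Z(s) there exists a unique factorization ζ' ∈ Z(s') with ζ' < ζ componentwise. -/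
lemma phi_add (n : ℕ) (a b : ℕ × ℕ × ℕ) : phi n (a + b) = phi n a + phi n b := by
  simp only [phi, Prod.fst_add, Prod.snd_add]
  ring

lemma zfac_finite (n s : ℕ) (hn : 1 ≤ n) : (Zfac n s).Finite := by
  apply Set.Finite.subset (Set.finite_Iic ((s, s, s) : ℕ × ℕ × ℕ))
  rintro ⟨x, y, z⟩ hp
  simp only [Zfac, phi, Set.mem_setOf_eq] at hp
  have h1 : x ≤ x * n := Nat.le_mul_of_pos_right x hn
  have h2 : y ≤ y * (3 * n - 2) := Nat.le_mul_of_pos_right y (by omega)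
  have h3 : z ≤ z * (3 * n - 1) := Nat.le_mul_of_pos_right z (by omega)
  simp only [Set.mem_Iic, Prod.mk_le_mk]
  omega

lemma box_unique (n : ℕ) (hodd : Odd n) (hn : 5 ≤ n) {m : ℕ} {a b : ℕ × ℕ × ℕ}
    (ha : IsNF n m a) (hb : IsNF n m b) : a = b := by
  obtain ⟨x, y, z⟩ := a
  obtain ⟨x', y', z'⟩ := b
  obtain ⟨hA, hz, hy, hx⟩ := ha
  obtain ⟨hB, hz', hy', hx'⟩ := hb
  have hodd' : n % 2 = 1 := Nat.odd_iff.mp hodd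
  have hz : z < 2 := hz
  have hy : y < (n + 1) / 2 := hy
  have hx : x < (3 * n - 1) / 2 := hx
  have hz' : z' < 2 := hz'
  have hy' : y' < (n + 1) / 2 := hy'
  have hx' : x' < (3 * n - 1) / 2 := hx'
  simp only [Zfac, phi, Set.mem_setOf_eq] at hA hB
  have hxyz : x * n + y * (3 * n - 2) + z * (3 * n - 1)
      = x' * n + y' * (3 * n - 2) + z' * (3 * n - 1) := by rw [hA, hB]
  zify [show 2 ≤ 3 * n by omega, show 1 ≤ 3 * n by omega] at hxyz
  have key : (n : ℤ) * ((x : ℤ) + 3 * y + 3 * z - ((x' : ℤ) + 3 * y' + 3 * z'))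
      = 2 * (y : ℤ) + (z : ℤ) - (2 * (y' : ℤ) + (z' : ℤ)) := by linear_combination hxyz
  set D : ℤ := (x : ℤ) + 3 * y + 3 * z - ((x' : ℤ) + 3 * y' + 3 * z') with hD
  have hnpos : (0 : ℤ) < n := by exact_mod_cast (by omega : 0 < n)
  have hEub : (n : ℤ) * D ≤ n := by
    rw [key]
    have : 2 * (y : ℤ) + 1 ≤ n := by exact_mod_cast (by omega : 2 * y + 1 ≤ n)
    omega
  have hElb : -(n : ℤ) ≤ (n : ℤ) * D := by
    rw [key]
    have : 2 * (y' : ℤ) + 1 ≤ n := by exact_mod_cast (by omega : 2 * y' + 1 ≤ n)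
    omega
  have hDub : D ≤ 1 := by
    by_contra h
    push_neg at h
    have : (n : ℤ) * 2 ≤ (n : ℤ) * D := by
      apply mul_le_mul_of_nonneg_left (by omega) (by omega)
    omega
  have hDlb : -1 ≤ D := by
    by_contra h
    push_neg at h
    have : (n : ℤ) * D ≤ (n : ℤ) * (-2) := by
      apply mul_le_mul_of_nonneg_left (by omega) (by omega)
    omega
  have hzz : ((x : ℕ), y, z) = ((x' : ℕ), y', z') ↔ x = x' ∧ y = y' ∧ z = z' := by
    simp [Prod.ext_iff]
  rw [hzz]
  interval_cases D <;> omega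

lemma Zshift (n : ℕ) (hn : 1 ≤ n) {s s' i : ℕ}
    (hcs : (Zfac n s).ncard = i) (hcs' : (Zfac n s').ncard = i)
    (w : ℕ × ℕ × ℕ) (hw : s' + phi n w = s) :
    Zfac n s = (fun η => η + w) '' Zfac n s' := by
  have hsub : (fun η => η + w) '' Zfac n s' ⊆ Zfac n s := by
    rintro _ ⟨η, hη, rfl⟩
    simp only [Zfac, Set.mem_setOf_eq] at hη ⊢
    rw [phi_add, hη, hw]
  refine (Set.eq_of_subset_of_ncard_le hsub ?_ (zfac_finite n s hn)).symm
  rw [Set.ncard_image_of_injective _ (add_left_injective w), hcs, hcs']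

lemma w_eq (n : ℕ) (hn : 1 ≤ n) {s s' i : ℕ} (hi : 1 ≤ i)
    (hcs : (Zfac n s).ncard = i) (hcs' : (Zfac n s').ncard = i)
    {w₁ w₂ : ℕ × ℕ × ℕ} (hw₁ : s' + phi n w₁ = s) (hw₂ : s' + phi n w₂ = s) :
    w₁ = w₂ := by
  have e₁ := Zshift n hn hcs hcs' w₁ hw₁
  have e₂ := Zshift n hn hcs hcs' w₂ hw₂
  have hfin' := zfac_finite n s' hn
  have hfin := zfac_finite n s hn
  set F := hfin'.toFinset with hF
  have hcard : F.card = i := by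
    rw [← hcs', Set.ncard_eq_toFinset_card _ hfin']
  have himg : ∀ w : ℕ × ℕ × ℕ, Zfac n s = (fun η => η + w) '' Zfac n s' →
      hfin.toFinset = F.image (fun η => η + w) := by
    intro w e
    ext ζ
    simp only [Set.Finite.mem_toFinset, Finset.mem_image, hF, e, Set.mem_image]
  have hsum : ∀ w : ℕ × ℕ × ℕ, Zfac n s = (fun η => η + w) '' Zfac n s' →
      hfin.toFinset.sum id = F.sum id + i • w := by
    intro w e
    rw [himg w e, Finset.sum_image (fun a _ b _ h => by simpa using h)]
    simp only [id]
    rw [Finset.sum_add_distrib, Finset.sum_const, hcard]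
  have h12 : F.sum id + i • w₁ = F.sum id + i • w₂ := by
    rw [← hsum w₁ e₁, ← hsum w₂ e₂]
  have h3 : i • w₁ = i • w₂ := by exact add_left_cancel h12
  have h1 : i * w₁.1 = i * w₂.1 := by
    have := congrArg Prod.fst h3; simpa [smul_eq_mul] using this
  have h2 : i * w₁.2.1 = i * w₂.2.1 := by
    have := congrArg (fun p => p.2.1) h3; simpa [smul_eq_mul] using this
  have h4 : i * w₁.2.2 = i * w₂.2.2 := by
    have := congrArg (fun p => p.2.2) h3; simpa [smul_eq_mul] using this
  have : i ≠ 0 := by omega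
  ext
  · exact Nat.eq_of_mul_eq_mul_left (by omega) h1
  · exact Nat.eq_of_mul_eq_mul_left (by omega) h2
  · exact Nat.eq_of_mul_eq_mul_left (by omega) h4

/-- For `s, s' ∈ M_i`: `nf(s') < nf(s)` iff every factorization of `s` dominates a
unique factorization of `s'` (componentwise strict order on `ℕ³`). -/
theorem stmt13 (n : ℕ) (hodd : Odd n) (hn : 5 ≤ n) (i : ℕ) (hi : 1 ≤ i)
    (s s' : ℕ) (hs : s ∈ Mset n i) (hs' : s' ∈ Mset n i)
    (p q : ℕ × ℕ × ℕ) (hp : IsNF n s p) (hq : IsNF n s' q) :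
    q < p ↔ ∀ ζ ∈ Zfac n s, ∃! ζ' : ℕ × ℕ × ℕ, ζ' ∈ Zfac n s' ∧ ζ' < ζ := by
  have hn1 : 1 ≤ n := by omega
  have hcs : (Zfac n s).ncard = i := hs.2
  have hcs' : (Zfac n s').ncard = i := hs'.2
  constructor
  · intro hqp ζ hζ
    have hle : q ≤ p := le_of_lt hqp
    have hle1 : q.1 ≤ p.1 := hle.1
    have hle2 : q.2.1 ≤ p.2.1 := hle.2.1
    have hle3 : q.2.2 ≤ p.2.2 := hle.2.2
    set δ : ℕ × ℕ × ℕ := (p.1 - q.1, p.2.1 - q.2.1, p.2.2 - q.2.2) with hδdef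
    have hqδ : q + δ = p := by
      ext <;> simp [hδdef, Prod.fst_add, Prod.snd_add] <;> omega
    have hδw : s' + phi n δ = s := by
      have := phi_add n q δ
      rw [hqδ] at this
      rw [← hq.1, ← this, hp.1]
    have e := Zshift n hn1 hcs hcs' δ hδw
    have hζ' := e ▸ hζ
    obtain ⟨η, hη, hηζ⟩ := hζ'
    have hηζ : η + δ = ζ := hηζ
    have hδne : δ ≠ 0 := by
      intro h
      rw [h, add_zero] at hqδ
      exact absurd hqδ (ne_of_lt hqp)
    have hηlt : η < ζ := by
      refine lt_of_le_of_ne ?_ ?_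
      · rw [← hηζ]; exact le_self_add
      · intro h
        apply hδne
        have : η + δ = η + 0 := by rw [add_zero, hηζ, ← h]
        exact add_left_cancel this
    refine ⟨η, ⟨hη, hηlt⟩, ?_⟩
    rintro ζ'' ⟨hζ''fac, hζ''lt⟩
    -- uniqueness via w_eq
    have key : ∀ θ : ℕ × ℕ × ℕ, θ ∈ Zfac n s' → θ < ζ →
        s' + phi n (ζ.1 - θ.1, ζ.2.1 - θ.2.1, ζ.2.2 - θ.2.2) = s := by
      intro θ hθ hθζ
      have h1 : θ.1 ≤ ζ.1 := hθζ.le.1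
      have h2 : θ.2.1 ≤ ζ.2.1 := hθζ.le.2.1
      have h3 : θ.2.2 ≤ ζ.2.2 := hθζ.le.2.2
      have hsum : θ + (ζ.1 - θ.1, ζ.2.1 - θ.2.1, ζ.2.2 - θ.2.2) = ζ := by
        ext <;> simp [Prod.fst_add, Prod.snd_add] <;> omega
      have := phi_add n θ (ζ.1 - θ.1, ζ.2.1 - θ.2.1, ζ.2.2 - θ.2.2)
      rw [hsum] at this
      rw [← hθ, ← this]
      exact hζ
    have hw := w_eq n hn1 hi hcs hcs' (key ζ'' hζ''fac hζ''lt) (key η hη hηlt)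
    have h1 : ζ''.1 ≤ ζ.1 := hζ''lt.le.1
    have h2 : ζ''.2.1 ≤ ζ.2.1 := hζ''lt.le.2.1
    have h3 : ζ''.2.2 ≤ ζ.2.2 := hζ''lt.le.2.2
    have h4 : η.1 ≤ ζ.1 := hηlt.le.1
    have h5 : η.2.1 ≤ ζ.2.1 := hηlt.le.2.1
    have h6 : η.2.2 ≤ ζ.2.2 := hηlt.le.2.2
    have hw1 : ζ.1 - ζ''.1 = ζ.1 - η.1 := congrArg Prod.fst hw
    have hw2 : ζ.2.1 - ζ''.2.1 = ζ.2.1 - η.2.1 := congrArg (fun p => p.2.1) hw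
    have hw3 : ζ.2.2 - ζ''.2.2 = ζ.2.2 - η.2.2 := congrArg (fun p => p.2.2) hw
    ext <;> omega
  · intro H
    obtain ⟨ζ', ⟨hζ'fac, hζ'lt⟩, _⟩ := H p hp.1
    have hζ'le : ζ' ≤ p := le_of_lt hζ'lt
    have hζ'nf : IsNF n s' ζ' :=
      ⟨hζ'fac, lt_of_le_of_lt hζ'le.2.2 hp.2.1, lt_of_le_of_lt hζ'le.2.1 hp.2.2.1,
        lt_of_le_of_lt hζ'le.1 hp.2.2.2⟩
    have : ζ' = q := box_unique n hodd hn hζ'nf hq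
    rwa [this] at hζ'lt
end

section
/- Let n be an odd integer with n ≥ 5, T = {an + b(3n−2) + c(3n−1) : a,b,c ∈ ℕ}, F(T) = n(3n−7)/2 + 2, S = T ∪ {F(T)}, and let i be an integer with 2 ≤ i ≤ (n−3)/2. Then the set of minimal elements (with respect to the componentwise order on ℕ³) of nf(M_i) = {nf(s) : s ∈ M_i} equals {((3n−5)/2, i−2, 1), (3(i−1), i−1, 0)}. -/
lemma gen_a (g : ℕ) : 3 * (2*g+7) - 2 = 6*g+19 := by omega
lemma gen_b (g : ℕ) : 3 * (2*g+7) - 1 = 6*g+20 := by omega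

lemma phi_eq (g a b c : ℕ) :
    phi (2*g+7) (a, b, c) = a*(2*g+7) + b*(6*g+19) + c*(6*g+20) := by
  show a * (2*g+7) + b * (3*(2*g+7) - 2) + c * (3*(2*g+7) - 1) = _
  rw [gen_a, gen_b]

lemma FTn (g : ℕ) : FT (2*g+7) = 6*g^2 + 35*g + 51 := by
  show (2*g+7) * (3*(2*g+7) - 7) / 2 + 2 = _
  rw [show 3*(2*g+7) - 7 = 6*g+14 from by omega,
      show (2*g+7) * (6*g+14) = (6*g^2 + 35*g + 49) * 2 from by ring,
      Nat.mul_div_cancel _ (by norm_num)]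

lemma int_window (N W V : ℤ) (hN : 0 < N) (hkey : N * W = V) (h1 : -N < V) (h2 : V < N) :
    W = 0 := by
  rcases lt_trichotomy W 0 with hw | hw | hw
  · exfalso; nlinarith
  · exact hw
  · exfalso; nlinarith

lemma int_window2 (N W V : ℤ) (hN : 0 < N) (hkey : N * W = V) (h1 : -N < V) (h2 : V < 2*N) :
    W = 0 ∨ W = 1 := by
  rcases lt_trichotomy W 0 with hw | hw | hw
  · exfalso; nlinarith
  · exact Or.inl hw
  · rcases lt_trichotomy W 1 with hw1 | hw1 | hw1
    · omega
    · exact Or.inr hw1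
    · exfalso; nlinarith

lemma classify (g x y z a b c : ℕ) (hz : z ≤ 1) (hy : y ≤ g+3) (hx : x ≤ 3*g+9)
    (heq : a*(2*g+7) + b*(6*g+19) + c*(6*g+20) = x*(2*g+7) + y*(6*g+19) + z*(6*g+20)) :
    (∃ k, k ≤ y ∧ a + 3*k = x ∧ b + k = y ∧ c = z + 2*k) ∨
    (z = 1 ∧ 3*g+8 ≤ x ∧ a + (3*g+8) = x ∧ b = y + g + 4 ∧ c = 0) ∨
    (z = 1 ∧ y = g+3 ∧ a = x + 3*g + 11 ∧ b = 0 ∧ c = 0) := by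
  have hbound : x*(2*g+7) + y*(6*g+19) + z*(6*g+20) ≤ 12*g^2 + 82*g + 140 := by
    have h1 : x*(2*g+7) ≤ (3*g+9)*(2*g+7) := Nat.mul_le_mul_right _ hx
    have h2 : y*(6*g+19) ≤ (g+3)*(6*g+19) := Nat.mul_le_mul_right _ hy
    have h3 : z*(6*g+20) ≤ 1*(6*g+20) := Nat.mul_le_mul_right _ hz
    nlinarith
  have hb : b ≤ 2*g+7 := by
    by_contra hb'
    push_neg at hb'
    have : (2*g+8)*(6*g+19) ≤ b*(6*g+19) := Nat.mul_le_mul_right _ hb'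
    nlinarith
  have hc : c ≤ 2*g+7 := by
    by_contra hc'
    push_neg at hc'
    have : (2*g+8)*(6*g+20) ≤ c*(6*g+20) := Nat.mul_le_mul_right _ hc'
    nlinarith
  have heqz : (a:ℤ)*(2*(g:ℤ)+7) + (b:ℤ)*(6*(g:ℤ)+19) + (c:ℤ)*(6*(g:ℤ)+20)
      = (x:ℤ)*(2*(g:ℤ)+7) + (y:ℤ)*(6*(g:ℤ)+19) + (z:ℤ)*(6*(g:ℤ)+20) := by
    exact_mod_cast heq
  have key : (2*(g:ℤ)+7) * ((a:ℤ)+3*(b:ℤ)+3*(c:ℤ) - ((x:ℤ)+3*(y:ℤ)+3*(z:ℤ)))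
      = 2*(b:ℤ)+(c:ℤ) - (2*(y:ℤ)+(z:ℤ)) := by linear_combination heqz
  have hlb : (-1:ℤ) ≤ (a:ℤ)+3*(b:ℤ)+3*(c:ℤ) - ((x:ℤ)+3*(y:ℤ)+3*(z:ℤ)) := by
    refine le_of_mul_le_mul_left ?_ (show (0:ℤ) < 2*(g:ℤ)+7 by positivity)
    rw [key]; omega
  have hub : (a:ℤ)+3*(b:ℤ)+3*(c:ℤ) - ((x:ℤ)+3*(y:ℤ)+3*(z:ℤ)) ≤ 3 := by
    refine le_of_mul_le_mul_left ?_ (show (0:ℤ) < 2*(g:ℤ)+7 by positivity)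
    rw [key]; omega
  have hcase : (a:ℤ)+3*(b:ℤ)+3*(c:ℤ) - ((x:ℤ)+3*(y:ℤ)+3*(z:ℤ)) = -1 ∨
      (a:ℤ)+3*(b:ℤ)+3*(c:ℤ) - ((x:ℤ)+3*(y:ℤ)+3*(z:ℤ)) = 0 ∨
      (a:ℤ)+3*(b:ℤ)+3*(c:ℤ) - ((x:ℤ)+3*(y:ℤ)+3*(z:ℤ)) = 1 ∨
      (a:ℤ)+3*(b:ℤ)+3*(c:ℤ) - ((x:ℤ)+3*(y:ℤ)+3*(z:ℤ)) = 2 ∨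
      (a:ℤ)+3*(b:ℤ)+3*(c:ℤ) - ((x:ℤ)+3*(y:ℤ)+3*(z:ℤ)) = 3 := by omega
  rcases hcase with hM | hM | hM | hM | hM <;> rw [hM] at key
  · exact Or.inr (Or.inr ⟨by omega, by omega, by omega, by omega, by omega⟩)
  · exact Or.inl ⟨y - b, by omega, by omega, by omega, by omega⟩
  · exact Or.inr (Or.inl ⟨by omega, by omega, by omega, by omega, by omega⟩)
  · exfalso; omega
  · exfalso; omega

lemma zfac_s2 (g j : ℕ) (hj : j ≤ g) :
    Zfac (2*g+7) (phi (2*g+7) (3*j+3, j+1, 0)) =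
      ↑((Finset.range (j+2)).image (fun k => ((3*j+3-3*k, j+1-k, 2*k) : ℕ×ℕ×ℕ))) := by
  ext ⟨a,b,c⟩
  simp only [Zfac, Set.mem_setOf_eq, Finset.coe_image, Set.mem_image, Finset.mem_coe,
    Finset.mem_range]
  constructor
  · intro hmem
    rw [phi_eq, phi_eq] at hmem
    rcases classify g (3*j+3) (j+1) 0 a b c (by omega) (by omega) (by omega) hmem with
      ⟨k, hk, h1, h2, h3⟩ | ⟨h1, _⟩ | ⟨h1, _⟩
    · exact ⟨k, by omega, by simp only [Prod.mk.injEq]; omega⟩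
    · omega
    · omega
  · rintro ⟨k, hk, h⟩
    simp only [Prod.mk.injEq] at h
    obtain ⟨rfl, rfl, rfl⟩ := h
    rw [phi_eq, phi_eq]
    zify [show 3*k ≤ 3*j+3 from by omega, show k ≤ j+1 from by omega]
    ring

lemma ncard_s2 (g j : ℕ) (hj : j ≤ g) :
    (Zfac (2*g+7) (phi (2*g+7) (3*j+3, j+1, 0))).ncard = j+2 := by
  rw [zfac_s2 g j hj, Set.ncard_coe_finset,
    Finset.card_image_of_injOn, Finset.card_range]
  intro u _ v _ huv
  simp only [Prod.mk.injEq] at huv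
  omega

lemma zfac_s1 (g j : ℕ) (hj : j ≤ g) :
    Zfac (2*g+7) (phi (2*g+7) (3*g+8, j, 1)) =
      ↑(((Finset.range (j+1)).image (fun k => ((3*g+8-3*k, j-k, 1+2*k) : ℕ×ℕ×ℕ))) ∪
        {((0, j+g+4, 0) : ℕ×ℕ×ℕ)}) := by
  ext ⟨a,b,c⟩
  simp only [Zfac, Set.mem_setOf_eq, Finset.coe_union, Set.mem_union, Finset.coe_image,
    Set.mem_image, Finset.mem_coe, Finset.mem_range, Finset.coe_singleton,
    Set.mem_singleton_iff]
  constructor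
  · intro hmem
    rw [phi_eq, phi_eq] at hmem
    rcases classify g (3*g+8) j 1 a b c (by omega) (by omega) (by omega) hmem with
      ⟨k, hk, h1, h2, h3⟩ | ⟨h1, h2, h3, h4, h5⟩ | ⟨h1, h2, _⟩
    · exact Or.inl ⟨k, by omega, by simp only [Prod.mk.injEq]; omega⟩
    · exact Or.inr (by simp only [Prod.mk.injEq]; omega)
    · omega
  · rintro (⟨k, hk, h⟩ | h)
    · simp only [Prod.mk.injEq] at h
      obtain ⟨rfl, rfl, rfl⟩ := h
      rw [phi_eq, phi_eq]
      zify [show 3*k ≤ 3*g+8 from by omega, show k ≤ j from by omega]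
      ring
    · simp only [Prod.mk.injEq] at h
      obtain ⟨rfl, rfl, rfl⟩ := h
      rw [phi_eq, phi_eq]
      ring

lemma ncard_s1 (g j : ℕ) (hj : j ≤ g) :
    (Zfac (2*g+7) (phi (2*g+7) (3*g+8, j, 1))).ncard = j+2 := by
  rw [zfac_s1 g j hj, Set.ncard_coe_finset]
  rw [Finset.card_union_of_disjoint, Finset.card_image_of_injOn, Finset.card_range,
    Finset.card_singleton]
  · intro u _ v _ huv
    simp only [Prod.mk.injEq] at huv
    omega
  · simp only [Finset.disjoint_left, Finset.mem_image, Finset.mem_range,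
      Finset.mem_singleton]
    rintro p ⟨k, hk, rfl⟩ h
    simp only [Prod.mk.injEq] at h
    omega

lemma ap_s1 (g j : ℕ) (hj : j ≤ g) : phi (2*g+7) (3*g+8, j, 1) ∈ Ap (2*g+7) := by
  constructor
  · exact Or.inl ⟨3*g+8, j, 1, rfl⟩
  · rintro ⟨t, htS, hteq⟩
    rcases htS with ⟨a, b, c, rfl⟩ | ht
    · rw [gen_a, gen_b, FTn, phi_eq] at hteq
      have heqz : (a:ℤ)*(2*(g:ℤ)+7) + (b:ℤ)*(6*(g:ℤ)+19) + (c:ℤ)*(6*(g:ℤ)+20)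
          + (6*(g:ℤ)^2 + 35*(g:ℤ) + 51)
          = (3*(g:ℤ)+8)*(2*(g:ℤ)+7) + (j:ℤ)*(6*(g:ℤ)+19) + 1*(6*(g:ℤ)+20) := by
        exact_mod_cast hteq
      have hjz : (j:ℤ) ≤ (g:ℤ) := by exact_mod_cast hj
      have key : (2*(g:ℤ)+7) * ((a:ℤ)+3*(b:ℤ)+3*(c:ℤ) - (3*(j:ℤ)+4))
          = 2*(b:ℤ)+(c:ℤ) - (2*(j:ℤ)+3) := by linear_combination heqz
      have ha0 : (0:ℤ) ≤ (a:ℤ)*(2*(g:ℤ)+7) := by positivity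
      have hc0 : (0:ℤ) ≤ (c:ℤ)*(6*(g:ℤ)+20) := by positivity
      have hb0 : (0:ℤ) ≤ (b:ℤ)*(6*(g:ℤ)+19) := by positivity
      have hbz : (b:ℤ) ≤ (j:ℤ)+1 := by
        by_contra hb'
        push_neg at hb'
        have : ((j:ℤ)+2)*(6*(g:ℤ)+19) ≤ (b:ℤ)*(6*(g:ℤ)+19) := by
          apply mul_le_mul_of_nonneg_right (by omega) (by positivity)
        nlinarith
      have hcz : (c:ℤ) ≤ (g:ℤ)+1 := by
        by_contra hc'
        push_neg at hc'
        have h1 : ((g:ℤ)+2)*(6*(g:ℤ)+20) ≤ (c:ℤ)*(6*(g:ℤ)+20) := by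
          apply mul_le_mul_of_nonneg_right (by omega) (by positivity)
        have h2 : (j:ℤ)*(6*(g:ℤ)+19) ≤ (g:ℤ)*(6*(g:ℤ)+19) := by
          apply mul_le_mul_of_nonneg_right hjz (by positivity)
        nlinarith
      have hW := int_window (2*(g:ℤ)+7) _ _ (by positivity) key (by omega) (by omega)
      rw [hW, mul_zero] at key
      omega
    · simp only [Set.mem_singleton_iff] at ht
      subst ht
      rw [FTn, phi_eq] at hteq
      have hjz : j*(6*g+19) ≤ g*(6*g+19) := Nat.mul_le_mul_right _ hj
      nlinarith [hteq]

lemma ap_s2 (g j : ℕ) (hj : j ≤ g) : phi (2*g+7) (3*j+3, j+1, 0) ∈ Ap (2*g+7) := by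
  constructor
  · exact Or.inl ⟨3*j+3, j+1, 0, rfl⟩
  · rintro ⟨t, htS, hteq⟩
    rcases htS with ⟨a, b, c, rfl⟩ | ht
    · rw [gen_a, gen_b, FTn, phi_eq] at hteq
      have heqz : (a:ℤ)*(2*(g:ℤ)+7) + (b:ℤ)*(6*(g:ℤ)+19) + (c:ℤ)*(6*(g:ℤ)+20)
          + (6*(g:ℤ)^2 + 35*(g:ℤ) + 51)
          = (3*(j:ℤ)+3)*(2*(g:ℤ)+7) + ((j:ℤ)+1)*(6*(g:ℤ)+19) + 0*(6*(g:ℤ)+20) := by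
        exact_mod_cast hteq
      have hjz : (j:ℤ) ≤ (g:ℤ) := by exact_mod_cast hj
      have key : (2*(g:ℤ)+7) * ((a:ℤ)+3*(b:ℤ)+3*(c:ℤ)+3*(g:ℤ)+1-6*(j:ℤ))
          = 2*(b:ℤ)+(c:ℤ) - (2*(j:ℤ)+4) := by linear_combination heqz
      have ha0 : (0:ℤ) ≤ (a:ℤ)*(2*(g:ℤ)+7) := by positivity
      have hc0 : (0:ℤ) ≤ (c:ℤ)*(6*(g:ℤ)+20) := by positivity
      have hb0 : (0:ℤ) ≤ (b:ℤ)*(6*(g:ℤ)+19) := by positivity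
      have hjg : (j:ℤ)*(6*(g:ℤ)+19) ≤ (g:ℤ)*(6*(g:ℤ)+19) := by
        apply mul_le_mul_of_nonneg_right hjz (by positivity)
      have hjg2 : (j:ℤ)*(2*(g:ℤ)+7) ≤ (g:ℤ)*(2*(g:ℤ)+7) := by
        apply mul_le_mul_of_nonneg_right hjz (by positivity)
      have hbz : (b:ℤ) ≤ (g:ℤ) := by
        by_contra hb'
        push_neg at hb'
        have : ((g:ℤ)+1)*(6*(g:ℤ)+19) ≤ (b:ℤ)*(6*(g:ℤ)+19) := by
          apply mul_le_mul_of_nonneg_right (by omega) (by positivity)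
        nlinarith
      have hcz : (c:ℤ) ≤ (g:ℤ) := by
        by_contra hc'
        push_neg at hc'
        have : ((g:ℤ)+1)*(6*(g:ℤ)+20) ≤ (c:ℤ)*(6*(g:ℤ)+20) := by
          apply mul_le_mul_of_nonneg_right (by omega) (by positivity)
        nlinarith
      rcases int_window2 (2*(g:ℤ)+7) _ _ (by positivity) key (by omega) (by omega) with
        hW | hW <;> rw [hW] at key
      · rw [mul_zero] at key; omega
      · rw [mul_one] at key; omega
    · simp only [Set.mem_singleton_iff] at ht
      subst ht
      rw [FTn, phi_eq] at hteq
      have hjz : j*(2*g+7) ≤ g*(2*g+7) := Nat.mul_le_mul_right _ hj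
      have hjz2 : j*(6*g+19) ≤ g*(6*g+19) := Nat.mul_le_mul_right _ hj
      nlinarith [hteq]

lemma not_ap (g x : ℕ) : phi (2*g+7) (x, g+3, 1) ∉ Ap (2*g+7) := by
  rintro ⟨-, hno⟩
  refine hno ⟨(x+1)*(2*g+7) + (6*g+19), Or.inl ⟨x+1, 1, 0, by rw [gen_a, gen_b]; ring⟩, ?_⟩
  rw [FTn, phi_eq]
  ring

lemma count_le_a (g x y z : ℕ) (hz : z ≤ 1) (hy : y ≤ g+3) (hx : x ≤ 3*g+9)
    (hiii : ¬(z = 1 ∧ y = g+3)) (hii : ¬(z = 1 ∧ 3*g+8 ≤ x)) :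
    (Zfac (2*g+7) (phi (2*g+7) (x,y,z))).ncard ≤ min (x/3) y + 1 := by
  classical
  set E := ((Finset.range (min (x/3) y + 1)).image
      (fun k => ((x - 3*k, y - k, z + 2*k) : ℕ×ℕ×ℕ))) with hE
  have hsub : Zfac (2*g+7) (phi (2*g+7) (x,y,z)) ⊆ ↑E := by
    rintro ⟨a,b,c⟩ hmem
    simp only [Zfac, Set.mem_setOf_eq] at hmem
    rw [phi_eq, phi_eq] at hmem
    rcases classify g x y z a b c hz hy hx hmem with
      ⟨k, hk, h1, h2, h3⟩ | ⟨h1, h2, _⟩ | ⟨h1, h2, _⟩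
    · simp only [hE, Finset.coe_image, Set.mem_image, Finset.mem_coe, Finset.mem_range]
      exact ⟨k, by omega, by simp only [Prod.mk.injEq]; omega⟩
    · exact absurd ⟨h1, h2⟩ hii
    · exact absurd ⟨h1, h2⟩ hiii
  calc (Zfac (2*g+7) (phi (2*g+7) (x,y,z))).ncard
      ≤ (↑E : Set (ℕ×ℕ×ℕ)).ncard := Set.ncard_le_ncard hsub (E.finite_toSet)
    _ = E.card := Set.ncard_coe_finset E
    _ ≤ min (x/3) y + 1 := le_trans (Finset.card_image_le) (by simp)

lemma count_le_b (g x y z : ℕ) (hz : z ≤ 1) (hy : y ≤ g+3) (hx : x ≤ 3*g+9)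
    (hiii : ¬(z = 1 ∧ y = g+3)) :
    (Zfac (2*g+7) (phi (2*g+7) (x,y,z))).ncard ≤ min (x/3) y + 2 := by
  classical
  set E := ((Finset.range (min (x/3) y + 1)).image
      (fun k => ((x - 3*k, y - k, z + 2*k) : ℕ×ℕ×ℕ))) ∪
      {((x - (3*g+8), y+g+4, 0) : ℕ×ℕ×ℕ)} with hE
  have hsub : Zfac (2*g+7) (phi (2*g+7) (x,y,z)) ⊆ ↑E := by
    rintro ⟨a,b,c⟩ hmem
    simp only [Zfac, Set.mem_setOf_eq] at hmem
    rw [phi_eq, phi_eq] at hmem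
    simp only [hE, Finset.coe_union, Set.mem_union, Finset.coe_image, Set.mem_image,
      Finset.mem_coe, Finset.mem_range, Finset.coe_singleton, Set.mem_singleton_iff]
    rcases classify g x y z a b c hz hy hx hmem with
      ⟨k, hk, h1, h2, h3⟩ | ⟨h1, h2, h3, h4, h5⟩ | ⟨h1, h2, _⟩
    · exact Or.inl ⟨k, by omega, by simp only [Prod.mk.injEq]; omega⟩
    · exact Or.inr (by simp only [Prod.mk.injEq]; omega)
    · exact absurd ⟨h1, h2⟩ hiii
  calc (Zfac (2*g+7) (phi (2*g+7) (x,y,z))).ncard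
      ≤ (↑E : Set (ℕ×ℕ×ℕ)).ncard := Set.ncard_le_ncard hsub (E.finite_toSet)
    _ = E.card := Set.ncard_coe_finset E
    _ ≤ min (x/3) y + 2 := by
        refine le_trans (Finset.card_union_le _ _) ?_
        have h1 := Finset.card_image_le (s := Finset.range (min (x/3) y + 1))
          (f := fun k => ((x - 3*k, y - k, z + 2*k) : ℕ×ℕ×ℕ))
        simp only [Finset.card_range] at h1
        simp only [Finset.card_singleton]
        omega

lemma dominance (g j : ℕ) (hj : j ≤ g) (q : ℕ×ℕ×ℕ) (hq : q ∈ nfM (2*g+7) (j+2)) :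
    ((3*g+8, j, 1) : ℕ×ℕ×ℕ) ≤ q ∨ ((3*j+3, j+1, 0) : ℕ×ℕ×ℕ) ≤ q := by
  obtain ⟨x, y, z⟩ := q
  obtain ⟨s, ⟨hAp, hcard⟩, hZ, hz2, hy', hx'⟩ := hq
  simp only [Zfac, Set.mem_setOf_eq] at hZ
  subst hZ
  replace hz2 : z < 2 := hz2
  replace hy' : y < (2*g+7+1)/2 := hy'
  replace hx' : x < (3*(2*g+7)-1)/2 := hx'
  have hz : z ≤ 1 := by omega
  have hy : y ≤ g+3 := by omega
  have hx : x ≤ 3*g+9 := by omega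
  have hiii : ¬(z = 1 ∧ y = g+3) := by
    rintro ⟨rfl, rfl⟩
    exact not_ap g x hAp
  by_cases hcond : z = 1 ∧ 3*g+8 ≤ x
  · left
    have hle := count_le_b g x y z hz hy hx hiii
    rw [hcard] at hle
    simp only [Prod.le_def]
    omega
  · right
    have hle := count_le_a g x y z hz hy hx hiii hcond
    rw [hcard] at hle
    simp only [Prod.le_def]
    omega

lemma mem_nfM_p1 (g j : ℕ) (hj : j ≤ g) :
    ((3*g+8, j, 1) : ℕ×ℕ×ℕ) ∈ nfM (2*g+7) (j+2) := by
  refine ⟨phi (2*g+7) (3*g+8, j, 1), ⟨ap_s1 g j hj, ncard_s1 g j hj⟩, rfl, ?_, ?_, ?_⟩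
  · norm_num
  · show j < (2*g+7+1)/2
    omega
  · show 3*g+8 < (3*(2*g+7)-1)/2
    omega

lemma mem_nfM_p2 (g j : ℕ) (hj : j ≤ g) :
    ((3*j+3, j+1, 0) : ℕ×ℕ×ℕ) ∈ nfM (2*g+7) (j+2) := by
  refine ⟨phi (2*g+7) (3*j+3, j+1, 0), ⟨ap_s2 g j hj, ncard_s2 g j hj⟩, rfl, ?_, ?_, ?_⟩
  · norm_num
  · show j+1 < (2*g+7+1)/2
    omega
  · show 3*j+3 < (3*(2*g+7)-1)/2
    omega

/-- For `2 ≤ i ≤ (n-3)/2`, the minimal elements of `nf(M_i)` with respect to the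
componentwise order are `((3n-5)/2, i-2, 1)` and `(3(i-1), i-1, 0)`. -/
theorem stmt14 (n : ℕ) (hodd : Odd n) (hn : 5 ≤ n)
    (i : ℕ) (hi2 : 2 ≤ i) (hin : i ≤ (n - 3) / 2) :
    {p ∈ nfM n i | ∀ q ∈ nfM n i, q ≤ p → q = p} =
      {((3 * n - 5) / 2, i - 2, 1), (3 * (i - 1), i - 1, 0)} := by
  obtain ⟨m, hm⟩ := hodd
  obtain ⟨g, rfl⟩ : ∃ g, n = 2*g+7 := ⟨(n - 7)/2, by omega⟩
  obtain ⟨j, rfl⟩ : ∃ j, i = j+2 := ⟨i-2, by omega⟩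
  have hj : j ≤ g := by omega
  rw [show (3*(2*g+7)-5)/2 = 3*g+8 from by omega, show j+2-2 = j from by omega,
      show 3*(j+2-1) = 3*j+3 from by omega, show j+2-1 = j+1 from by omega]
  ext p
  simp only [Set.mem_sep_iff, Set.mem_insert_iff, Set.mem_singleton_iff]
  constructor
  · rintro ⟨hp, hmin⟩
    rcases dominance g j hj p hp with hle | hle
    · exact Or.inl ((hmin _ (mem_nfM_p1 g j hj) hle).symm)
    · exact Or.inr ((hmin _ (mem_nfM_p2 g j hj) hle).symm)
  · rintro (rfl | rfl)
    · refine ⟨mem_nfM_p1 g j hj, ?_⟩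
      intro q hq hle
      rcases dominance g j hj q hq with h | h
      · exact le_antisymm hle h
      · exfalso
        obtain ⟨x, y, z⟩ := q
        simp only [Prod.le_def] at h hle
        omega
    · refine ⟨mem_nfM_p2 g j hj, ?_⟩
      intro q hq hle
      rcases dominance g j hj q hq with h | h
      · exfalso
        obtain ⟨x, y, z⟩ := q
        simp only [Prod.le_def] at h hle
        omega
      · exact le_antisymm hle h
end

section
/- Let n be an odd integer with n ≥ 5, T = {an + b(3n−2) + c(3n−1) : a,b,c ∈ ℕ}, F(T) = n(3n−7)/2 + 2, S = T ∪ {F(T)}, and let i be an integer with 2 ≤ i ≤ (n−3)/2. Then the set 𝓜_i = {s ∈ M_i : nf(s) is minimal in nf(M_i)} has exactly two elements, namely 𝓜_i = { ((3n−5)/2)·n + (i−2)(3n−2) + (3n−1), 3(i−1)·n + (i−1)(3n−2) }. -/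
private lemma phi_eq_s15 (k : ℕ) (p : ℕ × ℕ × ℕ) :
    phi (2*k+7) p = p.1*(2*k+7) + p.2.1*(6*k+19) + p.2.2*(6*k+20) := by
  show p.1 * (2*k+7) + p.2.1 * (3*(2*k+7) - 2) + p.2.2 * (3*(2*k+7) - 1) = _
  have h1 : 3*(2*k+7) - 2 = 6*k+19 := by omega
  have h2 : 3*(2*k+7) - 1 = 6*k+20 := by omega
  rw [h1, h2]

private lemma FT_eq (k : ℕ) : FT (2*k+7) = 6*k^2 + 35*k + 51 := by
  show (2*k+7) * (3*(2*k+7) - 7) / 2 + 2 = _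
  have h1 : 3*(2*k+7) - 7 = 6*k+14 := by omega
  have h2 : (2*k+7) * (6*k+14) = (6*k^2 + 35*k + 49) * 2 := by ring
  rw [h1, h2, Nat.mul_div_cancel _ (by norm_num)]

private lemma mem_T (k : ℕ) (a b c : ℕ) :
    a*(2*k+7) + b*(6*k+19) + c*(6*k+20) ∈ Tset (2*k+7) := by
  refine ⟨a, b, c, ?_⟩
  have h1 : 3*(2*k+7) - 2 = 6*k+19 := by omega
  have h2 : 3*(2*k+7) - 1 = 6*k+20 := by omega
  rw [h1, h2]

private lemma T_elim (k : ℕ) {t : ℕ} (ht : t ∈ Tset (2*k+7)) :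
    ∃ a b c : ℕ, t = a*(2*k+7) + b*(6*k+19) + c*(6*k+20) := by
  obtain ⟨a,b,c,h⟩ := ht
  refine ⟨a,b,c, ?_⟩
  rw [h]
  have h1 : 3*(2*k+7) - 2 = 6*k+19 := by omega
  have h2 : 3*(2*k+7) - 1 = 6*k+20 := by omega
  rw [h1, h2]

private lemma not_Ap_ymax (k x : ℕ) :
    x*(2*k+7) + (k+3)*(6*k+19) + 1*(6*k+20) ∉ Ap (2*k+7) := by
  rintro ⟨hS, hno⟩
  exact hno ⟨(x+1)*(2*k+7) + 1*(6*k+19) + 0*(6*k+20),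
    Or.inl (mem_T k (x+1) 1 0), by rw [FT_eq]; ring⟩

private lemma s1_Ap (k j : ℕ) (hj : j ≤ k) :
    (3*k+8)*(2*k+7) + j*(6*k+19) + 1*(6*k+20) ∈ Ap (2*k+7) := by
  constructor
  · exact Or.inl (mem_T k (3*k+8) j 1)
  · rintro ⟨t, ht, heq⟩
    rcases ht with htT | htF
    · obtain ⟨a,b,c,rfl⟩ := T_elim k htT
      rw [FT_eq] at heq
      have hZ : (a:ℤ)*(2*(k:ℤ)+7) + (b:ℤ)*(6*(k:ℤ)+19) + (c:ℤ)*(6*(k:ℤ)+20) + (6*(k:ℤ)^2+35*(k:ℤ)+51)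
          = (3*(k:ℤ)+8)*(2*(k:ℤ)+7) + (j:ℤ)*(6*(k:ℤ)+19) + 1*(6*(k:ℤ)+20) := by exact_mod_cast heq
      have hD : ((a:ℤ) + 3*b + 3*c - 3*(j:ℤ) - 4) * (2*(k:ℤ)+7) = 2*(b:ℤ) + c - 2*(j:ℤ) - 3 := by
        linear_combination hZ
      have hjk : (j:ℤ) ≤ (k:ℤ) := by exact_mod_cast hj
      have ha0 : (0:ℤ) ≤ a := Int.natCast_nonneg a
      have hb0 : (0:ℤ) ≤ b := Int.natCast_nonneg b
      have hc0 : (0:ℤ) ≤ c := Int.natCast_nonneg c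
      have hk0 : (0:ℤ) ≤ k := Int.natCast_nonneg k
      have hcase : (a:ℤ) + 3*b + 3*c - 3*(j:ℤ) - 4 ≤ -1 ∨ (a:ℤ)+3*(b:ℤ)+3*(c:ℤ)-3*(j:ℤ)-4 = 0
          ∨ 1 ≤ (a:ℤ)+3*(b:ℤ)+3*(c:ℤ)-3*(j:ℤ)-4 := by omega
      rcases hcase with h | h | h
      · have h1 : ((a:ℤ)+3*b+3*c-3*(j:ℤ)-4) * (2*(k:ℤ)+7) ≤ (-1) * (2*(k:ℤ)+7) :=
          mul_le_mul_of_nonneg_right h (by positivity)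
        linarith [hD]
      · rw [h, zero_mul] at hD
        omega
      · have h1 : 1 * (2*(k:ℤ)+7) ≤ ((a:ℤ)+3*b+3*c-3*(j:ℤ)-4) * (2*(k:ℤ)+7) :=
          mul_le_mul_of_nonneg_right h (by positivity)
        nlinarith [hD, h1]
    · rw [Set.mem_singleton_iff] at htF
      subst htF
      rw [FT_eq] at heq
      have hZ : (6*(k:ℤ)^2+35*(k:ℤ)+51) + (6*(k:ℤ)^2+35*(k:ℤ)+51)
          = (3*(k:ℤ)+8)*(2*(k:ℤ)+7) + (j:ℤ)*(6*(k:ℤ)+19) + 1*(6*(k:ℤ)+20) := by exact_mod_cast heq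
      have hjk : (j:ℤ) ≤ (k:ℤ) := by exact_mod_cast hj
      have h1 : (j:ℤ)*(6*(k:ℤ)+19) ≤ (k:ℤ)*(6*(k:ℤ)+19) :=
        mul_le_mul_of_nonneg_right hjk (by positivity)
      nlinarith [hZ, h1]

private lemma s2_Ap (k j : ℕ) (hj : j ≤ k) :
    (3*(j+1))*(2*k+7) + (j+1)*(6*k+19) + 0*(6*k+20) ∈ Ap (2*k+7) := by
  constructor
  · exact Or.inl (mem_T k (3*(j+1)) (j+1) 0)
  · rintro ⟨t, ht, heq⟩
    rcases ht with htT | htF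
    · obtain ⟨a,b,c,rfl⟩ := T_elim k htT
      rw [FT_eq] at heq
      have hZ : (a:ℤ)*(2*(k:ℤ)+7) + (b:ℤ)*(6*(k:ℤ)+19) + (c:ℤ)*(6*(k:ℤ)+20) + (6*(k:ℤ)^2+35*(k:ℤ)+51)
          = (3*((j:ℤ)+1))*(2*(k:ℤ)+7) + ((j:ℤ)+1)*(6*(k:ℤ)+19) + 0*(6*(k:ℤ)+20) := by exact_mod_cast heq
      have hD : ((a:ℤ) + 3*b + 3*c + 3*(k:ℤ) + 2 - 6*(j:ℤ)) * (2*(k:ℤ)+7)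
          = 2*(b:ℤ) + c + 2*(k:ℤ) - 2*(j:ℤ) + 3 := by
        linear_combination hZ
      have hjk : (j:ℤ) ≤ (k:ℤ) := by exact_mod_cast hj
      have ha0 : (0:ℤ) ≤ a := Int.natCast_nonneg a
      have hb0 : (0:ℤ) ≤ b := Int.natCast_nonneg b
      have hc0 : (0:ℤ) ≤ c := Int.natCast_nonneg c
      have hk0 : (0:ℤ) ≤ k := Int.natCast_nonneg k
      set D : ℤ := (a:ℤ) + 3*b + 3*c + 3*(k:ℤ) + 2 - 6*(j:ℤ) with hDdef
      have hcase : D ≤ 0 ∨ D = 1 ∨ D = 2 ∨ 3 ≤ D := by omega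
      rcases hcase with h | h | h | h
      · have h1 : D * (2*(k:ℤ)+7) ≤ 0 := mul_nonpos_of_nonpos_of_nonneg h (by positivity)
        linarith [hD]
      · rw [h, one_mul] at hD
        omega
      · rw [h] at hD
        omega
      · have h1 : 3 * (2*(k:ℤ)+7) ≤ D * (2*(k:ℤ)+7) :=
          mul_le_mul_of_nonneg_right h (by positivity)
        nlinarith [hD, h1]
    · rw [Set.mem_singleton_iff] at htF
      subst htF
      rw [FT_eq] at heq
      have hZ : (6*(k:ℤ)^2+35*(k:ℤ)+51) + (6*(k:ℤ)^2+35*(k:ℤ)+51)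
          = (3*((j:ℤ)+1))*(2*(k:ℤ)+7) + ((j:ℤ)+1)*(6*(k:ℤ)+19) + 0*(6*(k:ℤ)+20) := by exact_mod_cast heq
      have hjk : (j:ℤ) ≤ (k:ℤ) := by exact_mod_cast hj
      have h1 : (j:ℤ)*(12*(k:ℤ)+40) ≤ (k:ℤ)*(12*(k:ℤ)+40) :=
        mul_le_mul_of_nonneg_right hjk (by positivity)
      nlinarith [hZ, h1]

private lemma zfac_ncard (k x y z : ℕ) (hz : z ≤ 1) (hy : y ≤ k+3) (hx : x ≤ 3*k+9)
    (hne : ¬(z = 1 ∧ y = k+3)) :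
    (Zfac (2*k+7) (x*(2*k+7) + y*(6*k+19) + z*(6*k+20))).ncard
      = min y (x/3) + 1 + (if z = 1 ∧ 3*k+8 ≤ x then 1 else 0) := by
  classical
  have hset : Zfac (2*k+7) (x*(2*k+7) + y*(6*k+19) + z*(6*k+20))
      = ↑(((Finset.range (min y (x/3) + 1)).image
            (fun a => ((x - 3*a, y - a, z + 2*a) : ℕ×ℕ×ℕ))) ∪
          (if z = 1 ∧ 3*k+8 ≤ x then {((x - (3*k+8), y + (k+4), 0) : ℕ×ℕ×ℕ)} else ∅)) := by
    ext ⟨u, v, w⟩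
    simp only [Zfac, Set.mem_setOf_eq, phi_eq_s15, Finset.coe_union, Set.mem_union,
      Finset.mem_coe, Finset.mem_union, Finset.mem_image, Finset.mem_range]
    constructor
    · intro h
      have hZ : (u:ℤ)*(2*(k:ℤ)+7) + (v:ℤ)*(6*(k:ℤ)+19) + (w:ℤ)*(6*(k:ℤ)+20)
          = (x:ℤ)*(2*(k:ℤ)+7) + (y:ℤ)*(6*(k:ℤ)+19) + (z:ℤ)*(6*(k:ℤ)+20) := by exact_mod_cast h
      obtain ⟨K, a, hu, hv, hw⟩ : ∃ K a : ℤ,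
          ((u:ℤ) = (x:ℤ) + 3*a - K*(3*(k:ℤ)+11)) ∧ ((v:ℤ) = (y:ℤ) + a + K*((k:ℤ)+3)) ∧
          ((w:ℤ) = (z:ℤ) - 2*a + K) := by
        refine ⟨(u:ℤ)+3*v+3*w-((x:ℤ)+3*y+3*z),
          (v:ℤ)-y-((u:ℤ)+3*v+3*w-((x:ℤ)+3*y+3*z))*((k:ℤ)+3), ?_, by ring, ?_⟩
        · linear_combination 3*hZ
        · linear_combination -hZ
      have hu0 : (0:ℤ) ≤ u := Int.natCast_nonneg u
      have hv0 : (0:ℤ) ≤ v := Int.natCast_nonneg v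
      have hw0 : (0:ℤ) ≤ w := Int.natCast_nonneg w
      have hyc : (y:ℤ) ≤ (k:ℤ)+3 := by exact_mod_cast hy
      have hzc : (z:ℤ) ≤ 1 := by exact_mod_cast hz
      have hxc : (x:ℤ) ≤ 3*(k:ℤ)+9 := by exact_mod_cast hx
      have hKge : 0 ≤ K := by
        by_contra hcon
        push_neg at hcon
        have hK1 : K ≤ -1 := by omega
        have h1 : K*((k:ℤ)+3) ≤ (-1)*((k:ℤ)+3) :=
          mul_le_mul_of_nonneg_right hK1 (by positivity)
        have ha0 : 0 ≤ a := by linarith [hv]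
        have ha1 : a ≤ 0 := by linarith [hw]
        have hK2 : -1 ≤ K := by linarith [hw]
        have hKeq : K = -1 := le_antisymm hK1 hK2
        subst hKeq
        exact hne ⟨by omega, by omega⟩
      have hKle : K ≤ 1 := by
        by_contra hcon
        push_neg at hcon
        have hK2 : 2 ≤ K := by omega
        have e1 : (0:ℤ) ≤ (x:ℤ) + 3*a - K*(3*(k:ℤ)+11) := by rw [← hu]; exact hu0
        have e2 : (0:ℤ) ≤ (z:ℤ) - 2*a + K := by rw [← hw]; exact hw0
        have key : K*(6*(k:ℤ)+19) ≤ 3*(z:ℤ) + 2*(x:ℤ) := by nlinarith [e1, e2]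
        have h2 : 2*(6*(k:ℤ)+19) ≤ K*(6*(k:ℤ)+19) :=
          mul_le_mul_of_nonneg_right hK2 (by positivity)
        linarith
      have hKcase : K = 0 ∨ K = 1 := by omega
      rcases hKcase with rfl | rfl
      · left
        refine ⟨y - v, by omega, ?_⟩
        simp only [Prod.mk.injEq]
        refine ⟨by omega, by omega, by omega⟩
      · right
        have hcond : z = 1 ∧ 3*k+8 ≤ x := by
          constructor <;> omega
        rw [if_pos hcond]
        simp only [Finset.mem_singleton, Prod.mk.injEq]
        refine ⟨by omega, by omega, by omega⟩
    · rintro (⟨a, ha, heq⟩ | hmem)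
      · obtain ⟨h1, h2, h3⟩ : x - 3*a = u ∧ y - a = v ∧ z + 2*a = w := by
          simpa [Prod.mk.injEq] using heq
        have hay : a ≤ y := by omega
        have hax : 3*a ≤ x := by omega
        subst h1; subst h2; subst h3
        zify [hay, hax]
        ring
      · by_cases hcond : z = 1 ∧ 3*k+8 ≤ x
        · rw [if_pos hcond] at hmem
          simp only [Finset.mem_singleton, Prod.mk.injEq] at hmem
          obtain ⟨h1, h2, h3⟩ := hmem
          subst h1; subst h2; subst h3
          obtain ⟨rfl, hx8⟩ := hcond
          zify [hx8]
          ring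
        · rw [if_neg hcond] at hmem
          simp at hmem
  rw [hset, Set.ncard_coe_finset]
  have hinj : Function.Injective (fun a : ℕ => ((x - 3*a, y - a, z + 2*a) : ℕ×ℕ×ℕ)) := by
    intro a b hab
    simp only [Prod.mk.injEq] at hab
    omega
  have hdisj : Disjoint ((Finset.range (min y (x/3) + 1)).image
        (fun a => ((x - 3*a, y - a, z + 2*a) : ℕ×ℕ×ℕ)))
      (if z = 1 ∧ 3*k+8 ≤ x then {((x - (3*k+8), y + (k+4), 0) : ℕ×ℕ×ℕ)} else ∅) := by
    by_cases hcond : z = 1 ∧ 3*k+8 ≤ x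
    · rw [if_pos hcond]
      rw [Finset.disjoint_singleton_right]
      intro hmem
      simp only [Finset.mem_image, Finset.mem_range] at hmem
      obtain ⟨a, _, heq⟩ := hmem
      simp only [Prod.mk.injEq] at heq
      omega
    · rw [if_neg hcond]
      exact Finset.disjoint_empty_right _
  rw [Finset.card_union_of_disjoint hdisj,
    Finset.card_image_of_injective _ hinj, Finset.card_range]
  congr 1
  by_cases hcond : z = 1 ∧ 3*k+8 ≤ x
  · rw [if_pos hcond, if_pos hcond, Finset.card_singleton]
  · rw [if_neg hcond, if_neg hcond, Finset.card_empty]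

private lemma class_lemma (k j : ℕ) (hj : j ≤ k) (p : ℕ×ℕ×ℕ)
    (hp : p ∈ nfM (2*k+7) (j+2)) :
    ((3*k+8 : ℕ), (j : ℕ), (1:ℕ)) ≤ p ∨ ((3*(j+1) : ℕ), (j+1 : ℕ), (0:ℕ)) ≤ p := by
  obtain ⟨s, hsM, hNF⟩ := hp
  obtain ⟨hsAp, hscard⟩ := hsM
  obtain ⟨x, y, z⟩ := p
  obtain ⟨hphi, hz, hy, hx⟩ := hNF
  simp only at hphi hz hy hx
  have hz1 : z ≤ 1 := by omega
  have hy1 : y ≤ k+3 := by omega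
  have hx1 : x ≤ 3*k+9 := by omega
  have hs_eq : s = x*(2*k+7) + y*(6*k+19) + z*(6*k+20) := by
    rw [← hphi, phi_eq_s15]
  have hne : ¬(z = 1 ∧ y = k+3) := by
    rintro ⟨rfl, rfl⟩
    exact not_Ap_ymax k x (hs_eq ▸ hsAp)
  rw [hs_eq] at hscard
  rw [zfac_ncard k x y z hz1 hy1 hx1 hne] at hscard
  by_cases hc : z = 1 ∧ 3*k+8 ≤ x
  · rw [if_pos hc] at hscard
    left
    rw [Prod.mk_le_mk, Prod.mk_le_mk]
    exact ⟨hc.2, by omega, by omega⟩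
  · rw [if_neg hc] at hscard
    right
    rw [Prod.mk_le_mk, Prod.mk_le_mk]
    refine ⟨by omega, by omega, by omega⟩

private lemma isNF1 (k j : ℕ) (hj : j ≤ k) :
    IsNF (2*k+7) ((3*k+8)*(2*k+7) + j*(6*k+19) + 1*(6*k+20)) (3*k+8, j, 1) := by
  refine ⟨?_, show (1:ℕ) < 2 by omega, ?_, ?_⟩
  · show phi (2*k+7) _ = _
    rw [phi_eq_s15]
  · show j < (2*k+7+1)/2
    omega
  · show 3*k+8 < (3*(2*k+7)-1)/2
    omega

private lemma isNF2 (k j : ℕ) (hj : j ≤ k) :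
    IsNF (2*k+7) ((3*(j+1))*(2*k+7) + (j+1)*(6*k+19) + 0*(6*k+20)) (3*(j+1), j+1, 0) := by
  refine ⟨?_, show (0:ℕ) < 2 by omega, ?_, ?_⟩
  · show phi (2*k+7) _ = _
    rw [phi_eq_s15]
  · show j+1 < (2*k+7+1)/2
    omega
  · show 3*(j+1) < (3*(2*k+7)-1)/2
    omega

private lemma s1_M (k j : ℕ) (hj : j ≤ k) :
    (3*k+8)*(2*k+7) + j*(6*k+19) + 1*(6*k+20) ∈ Mset (2*k+7) (j+2) := by
  refine ⟨s1_Ap k j hj, ?_⟩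
  rw [zfac_ncard k (3*k+8) j 1 (by omega) (by omega) (by omega) (by omega)]
  rw [if_pos ⟨rfl, le_refl _⟩]
  omega

private lemma s2_M (k j : ℕ) (hj : j ≤ k) :
    (3*(j+1))*(2*k+7) + (j+1)*(6*k+19) + 0*(6*k+20) ∈ Mset (2*k+7) (j+2) := by
  refine ⟨s2_Ap k j hj, ?_⟩
  rw [zfac_ncard k (3*(j+1)) (j+1) 0 (by omega) (by omega) (by omega) (by omega)]
  rw [if_neg (by omega)]
  omega

/-- For `2 ≤ i ≤ (n-3)/2`, the set `𝓜_i` of elements of `M_i` whose normal form is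
minimal in `nf(M_i)` has exactly the two elements
`((3n-5)/2)n + (i-2)(3n-2) + (3n-1)` and `3(i-1)n + (i-1)(3n-2)`. -/
theorem stmt15 (n : ℕ) (hodd : Odd n) (hn : 5 ≤ n)
    (i : ℕ) (hi2 : 2 ≤ i) (hin : i ≤ (n - 3) / 2) :
    ({s ∈ Mset n i | ∃ p : ℕ × ℕ × ℕ, IsNF n s p ∧ ∀ q ∈ nfM n i, q ≤ p → q = p} =
      {((3 * n - 5) / 2) * n + (i - 2) * (3 * n - 2) + (3 * n - 1),
       3 * (i - 1) * n + (i - 1) * (3 * n - 2)}) ∧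
    ((3 * n - 5) / 2) * n + (i - 2) * (3 * n - 2) + (3 * n - 1) ≠
      3 * (i - 1) * n + (i - 1) * (3 * n - 2) := by
  obtain ⟨k, rfl⟩ : ∃ k, n = 2*k+7 := by
    obtain ⟨w, hw⟩ := hodd
    exact ⟨(n-7)/2, by omega⟩
  obtain ⟨j, rfl⟩ : ∃ j, i = j + 2 := ⟨i-2, by omega⟩
  have hjk : j ≤ k := by omega
  have hA : ((3*(2*k+7)-5)/2)*(2*k+7) + (j+2-2)*(3*(2*k+7)-2) + (3*(2*k+7)-1)
      = (3*k+8)*(2*k+7) + j*(6*k+19) + 1*(6*k+20) := by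
    have e1 : (3*(2*k+7)-5)/2 = 3*k+8 := by omega
    have e2 : j+2-2 = j := by omega
    have e3 : 3*(2*k+7)-2 = 6*k+19 := by omega
    have e4 : 3*(2*k+7)-1 = 6*k+20 := by omega
    rw [e1, e2, e3, e4]; ring
  have hB : 3*(j+2-1)*(2*k+7) + (j+2-1)*(3*(2*k+7)-2)
      = (3*(j+1))*(2*k+7) + (j+1)*(6*k+19) + 0*(6*k+20) := by
    have e2 : j+2-1 = j+1 := by omega
    have e3 : 3*(2*k+7)-2 = 6*k+19 := by omega
    rw [e2, e3]; ring
  rw [hA, hB]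
  constructor
  · ext s
    simp only [Set.mem_setOf_eq, Set.mem_insert_iff, Set.mem_singleton_iff]
    constructor
    · rintro ⟨hsM, p, hpNF, hmin⟩
      have hpmem : p ∈ nfM (2*k+7) (j+2) := ⟨s, hsM, hpNF⟩
      have hsphi : phi (2*k+7) p = s := hpNF.1
      rcases class_lemma k j hjk p hpmem with h | h
      · left
        have h1 : ((3*k+8 : ℕ), (j:ℕ), (1:ℕ)) ∈ nfM (2*k+7) (j+2) :=
          ⟨_, s1_M k j hjk, isNF1 k j hjk⟩
        have heqp := hmin _ h1 h
        rw [← hsphi, ← heqp, phi_eq_s15]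
      · right
        have h1 : ((3*(j+1) : ℕ), (j+1:ℕ), (0:ℕ)) ∈ nfM (2*k+7) (j+2) :=
          ⟨_, s2_M k j hjk, isNF2 k j hjk⟩
        have heqp := hmin _ h1 h
        rw [← hsphi, ← heqp, phi_eq_s15]
    · rintro (rfl | rfl)
      · refine ⟨s1_M k j hjk, (3*k+8, j, 1), isNF1 k j hjk, ?_⟩
        intro q hq hle
        rcases class_lemma k j hjk q hq with h | h
        · exact le_antisymm hle h
        · exfalso
          obtain ⟨q1, q2, q3⟩ := q
          rw [Prod.mk_le_mk, Prod.mk_le_mk] at h hle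
          omega
      · refine ⟨s2_M k j hjk, (3*(j+1), j+1, 0), isNF2 k j hjk, ?_⟩
        intro q hq hle
        rcases class_lemma k j hjk q hq with h | h
        · exfalso
          obtain ⟨q1, q2, q3⟩ := q
          rw [Prod.mk_le_mk, Prod.mk_le_mk] at h hle
          omega
        · exact le_antisymm hle h
  · intro hcon
    have hZ : (3*(k:ℤ)+8)*(2*(k:ℤ)+7) + (j:ℤ)*(6*(k:ℤ)+19) + 1*(6*(k:ℤ)+20)
        = (3*((j:ℤ)+1))*(2*(k:ℤ)+7) + ((j:ℤ)+1)*(6*(k:ℤ)+19) + 0*(6*(k:ℤ)+20) := by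
      exact_mod_cast hcon
    have hjk' : (j:ℤ) ≤ k := by exact_mod_cast hjk
    have h1 : (j:ℤ)*(6*(k:ℤ)+21) ≤ (k:ℤ)*(6*(k:ℤ)+21) :=
      mul_le_mul_of_nonneg_right hjk' (by positivity)
    nlinarith [hZ, h1, Int.natCast_nonneg k]
end

section
/- Let n be an odd integer with n ≥ 5 and let i be an integer with 2 ≤ i ≤ (n−1)/2. Set s'_i = 3(i−1)n + (i−1)(3n−2). Then the set of factorizations of s'_i is exactly Z(s'_i) = {(3x, x, 2(i−1−x)) : x ∈ ℕ, 0 ≤ x ≤ i−1}. In particular, for i = 2 the element s = 3n + (3n−2) = 2(3n−1) satisfies Z(s) = {(3,1,0), (0,0,2)}. -/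
lemma key_stmt16 (n j : ℕ) (hn : 5 ≤ n) (hjn : 2 * j + 3 ≤ n) :
    Zfac n (3 * j * n + j * (3 * n - 2)) =
      {p | ∃ x : ℕ, x ≤ j ∧ p = (3 * x, x, 2 * (j - x))} := by
  have h2 : 2 ≤ 3 * n := by omega
  have h1 : 1 ≤ 3 * n := by omega
  ext ⟨x, y, z⟩
  simp only [Zfac, phi, Set.mem_setOf_eq, Prod.mk.injEq]
  constructor
  · intro h
    zify [h2, h1] at h
    have hjn' : (2 : ℤ) * j + 3 ≤ n := by exact_mod_cast hjn
    have hyz : (y : ℤ) + z ≤ 2 * j := by nlinarith [h, hjn', (Nat.cast_nonneg x : (0:ℤ) ≤ x)]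
    have hk : ((x : ℤ) + 3 * y + 3 * z - 6 * j) * n = 2 * y + z - 2 * j := by linarith [h]
    have hk0 : (x : ℤ) + 3 * y + 3 * z - 6 * j = 0 := by
      rcases lt_trichotomy ((x : ℤ) + 3 * y + 3 * z - 6 * j) 0 with h' | h' | h'
      · nlinarith [(Nat.cast_nonneg y : (0:ℤ) ≤ y), (Nat.cast_nonneg z : (0:ℤ) ≤ z)]
      · exact h'
      · nlinarith [(Nat.cast_nonneg y : (0:ℤ) ≤ y), (Nat.cast_nonneg z : (0:ℤ) ≤ z)]
    have hd : 2 * (y : ℤ) + z = 2 * j := by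
      rw [hk0, zero_mul] at hk; linarith
    have hA : x + 3 * y + 3 * z = 6 * j := by exact_mod_cast sub_eq_zero.mp hk0
    have hd' : 2 * y + z = 2 * j := by exact_mod_cast hd
    exact ⟨y, by omega, by omega, rfl, by omega⟩
  · rintro ⟨w, hw, rfl, rfl, rfl⟩
    zify [h2, h1, hw]
    ring

/-- For `2 ≤ i ≤ (n-1)/2`, the factorizations of `s'_i = 3(i-1)n + (i-1)(3n-2)` are
exactly `(3x, x, 2(i-1-x))` for `0 ≤ x ≤ i-1`; in particular
`s = 3n + (3n-2) = 2(3n-1)` has `Z(s) = {(3,1,0), (0,0,2)}`. -/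
theorem stmt16 (n : ℕ) (hodd : Odd n) (hn : 5 ≤ n)
    (i : ℕ) (hi2 : 2 ≤ i) (hin : i ≤ (n - 1) / 2) :
    (Zfac n (3 * (i - 1) * n + (i - 1) * (3 * n - 2)) =
      {p | ∃ x : ℕ, x ≤ i - 1 ∧ p = (3 * x, x, 2 * (i - 1 - x))}) ∧
    3 * n + (3 * n - 2) = 2 * (3 * n - 1) ∧
    Zfac n (3 * n + (3 * n - 2)) =
      {((3 : ℕ), (1 : ℕ), (0 : ℕ)), ((0 : ℕ), (0 : ℕ), (2 : ℕ))} := by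
  obtain ⟨m, hm⟩ := hodd
  have hjn1 : 2 * (i - 1) + 3 ≤ n := by omega
  refine ⟨key_stmt16 n (i - 1) hn hjn1, by omega, ?_⟩
  have h1 : 3 * n + (3 * n - 2) = 3 * 1 * n + 1 * (3 * n - 2) := by omega
  rw [h1, key_stmt16 n 1 hn (by omega)]
  ext ⟨a, b, c⟩
  simp only [Set.mem_setOf_eq, Set.mem_insert_iff, Set.mem_singleton_iff, Prod.mk.injEq]
  constructor
  · rintro ⟨w, hw, h⟩
    interval_cases w
    · right; omega
    · left; omega
  · rintro (⟨rfl, rfl, rfl⟩ | ⟨rfl, rfl, rfl⟩)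
    · exact ⟨1, by omega, rfl, rfl, rfl⟩
    · exact ⟨0, by omega, rfl, rfl, rfl⟩
end

section
/- Let n be an odd integer with n ≥ 5, T = {an + b(3n−2) + c(3n−1) : a,b,c ∈ ℕ}, F(T) = n(3n−7)/2 + 2, and S = T ∪ {F(T)}. Let L be an L-shape associated to Ap(S, F(T)), and let i be an integer with 3 ≤ i ≤ (n−1)/2. Set s_i = ((3n−5)/2)·n + (i−2)(3n−2) + (3n−1). Then L ∩ Z(s_i) ⊆ { ((3n−5)/2, i−2, 1), (0, (n−3)/2 + i, 0), ((3n−5)/2 − 3(i−2), 0, 2(i−2)+1) }. -/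
theorem phi_three_one_zero {n : ℕ} (hn : 1 ≤ n) :
    phi n (3, 1, 0) = phi n (0, 0, 2) := by
  simp only [phi]
  omega

theorem IsLShape.eq_of_le_of_phi_eq {n : ℕ} {L : Set (ℕ × ℕ × ℕ)} (hL : IsLShape n L)
    {p u v : ℕ × ℕ × ℕ} (hp : p ∈ L) (hu : u ≤ p) (hv : v ≤ p)
    (h : phi n u = phi n v) : u = v :=
  hL.1.injOn (hL.2 p hp u hu) (hL.2 p hp v hv) h

theorem IsLShape.three_one_two_notMem {n : ℕ} {L : Set (ℕ × ℕ × ℕ)} (hL : IsLShape n L)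
    (hn : 1 ≤ n) : ((3, 1, 2) : ℕ × ℕ × ℕ) ∉ L := fun h => by
  have := hL.eq_of_le_of_phi_eq h (by decide) (by decide) (phi_three_one_zero hn)
  simp at this

theorem factorization_cases {m i x y z : ℕ} (hi : 2 ≤ i) (him : i ≤ m + 1)
    (h : phi (2 * m + 1) (x, y, z) =
      ((3 * (2 * m + 1) - 5) / 2) * (2 * m + 1) + (i - 2) * (3 * (2 * m + 1) - 2) +
        (3 * (2 * m + 1) - 1)) :
    (2 * y + z + 3 = 2 * i ∧ x + 3 * y + 3 * z + 4 = 3 * m + 3 * i) ∨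
      (x = 0 ∧ y + 1 = m + i ∧ z = 0) := by
  have h3m : 1 ≤ 3 * m := by omega
  simp only [phi, show (3 * (2 * m + 1) - 5) / 2 = 3 * m - 1 by omega,
    show 3 * (2 * m + 1) - 2 = 6 * m + 1 by omega,
    show 3 * (2 * m + 1) - 1 = 6 * m + 2 by omega] at h
  zify [h3m, hi] at h
  set D : ℤ := x + 3 * y + 3 * z - (3 * m + 3 * i - 4) with hD
  have key : (2 * m + 1 : ℤ) * D = 2 * y + z - (2 * i - 3) := by
    rw [hD]; linear_combination h
  have hD0 : 0 ≤ D := by nlinarith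
  -- `2y + z ≤ 2(A / 3)` turns `key` into `(6m + 1) D ≤ 6m + 1`
  have hD1 : D ≤ 1 := by nlinarith
  obtain hD | hD : D = 0 ∨ D = 1 := by omega
  · rw [hD, mul_zero] at key
    omega
  · rw [hD, mul_one] at key
    omega

theorem stmt18_general (n : ℕ) (hodd : Odd n)
    (L : Set (ℕ × ℕ × ℕ)) (hL : IsLShape n L)
    (i : ℕ) (hi3 : 3 ≤ i) (hin : i ≤ (n - 1) / 2) :
    L ∩ Zfac n (((3 * n - 5) / 2) * n + (i - 2) * (3 * n - 2) + (3 * n - 1)) ⊆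
      {((3 * n - 5) / 2, i - 2, 1), (0, (n - 3) / 2 + i, 0),
       ((3 * n - 5) / 2 - 3 * (i - 2), 0, 2 * (i - 2) + 1)} := by
  obtain ⟨m, rfl⟩ := hodd
  rintro ⟨x, y, z⟩ ⟨hpL, hpZ⟩
  have hbelow : ¬ (3 ≤ x ∧ 1 ≤ y ∧ 2 ≤ z) := fun ⟨hx, hy, hz⟩ =>
    hL.three_one_two_notMem (by omega) (hL.2 _ hpL _ ⟨hx, hy, hz⟩)
  simp only [Set.mem_insert_iff, Set.mem_singleton_iff, Prod.mk.injEq]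
  rcases factorization_cases (by omega) (by omega) hpZ with ⟨h2yz, hA⟩ | ⟨rfl, hy, rfl⟩ <;>
    omega

/-- For an L-shape `L` and `3 ≤ i ≤ (n-1)/2`, the factorizations of
`s_i = ((3n-5)/2)n + (i-2)(3n-2) + (3n-1)` lying in `L` are among three candidates. -/
theorem stmt18 (n : ℕ) (hodd : Odd n) (hn : 5 ≤ n)
    (L : Set (ℕ × ℕ × ℕ)) (hL : IsLShape n L)
    (i : ℕ) (hi3 : 3 ≤ i) (hin : i ≤ (n - 1) / 2) :
    L ∩ Zfac n (((3 * n - 5) / 2) * n + (i - 2) * (3 * n - 2) + (3 * n - 1)) ⊆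
      {((3 * n - 5) / 2, i - 2, 1), (0, (n - 3) / 2 + i, 0),
       ((3 * n - 5) / 2 - 3 * (i - 2), 0, 2 * (i - 2) + 1)} :=
  stmt18_general n hodd L hL i hi3 hin
end
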